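/- Let f be an elliptic Möbius transformation fixing the open unit disc 𝔻 of finite order m (so f^m is the identity and m is least with this property), and let f₁, f₂, … be non-constant holomorphic self-maps of 𝔻 such that Σₙ ρ(fₙ(a), f(a)) < ∞ and Σₙ ρ(fₙ(b), f(b)) < ∞ for two distinct points a, b ∈ 𝔻. Then there is a non-constant holomorphic self-map F of 𝔻 such that for each j ∈ {0, 1, …, m−1} the subsequence (F_{nm+j})ₙ of the left-composition sequence Fₙ = fₙ ∘ fₙ₋₁ ∘ ⋯ ∘ f₁ converges locally uniformly on 𝔻 to f^j ∘ F. -/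

import Mathlib

open Complex Set Filter Metric
open Topology

/-- The open unit disc in the complex plane. -/
def unitDisc : Set ℂ := {z : ℂ | ‖z‖ < 1}

/-- Inverse hyperbolic tangent. -/
noncomputable def artanh (x : ℝ) : ℝ := (1 / 2) * Real.log ((1 + x) / (1 - x))

/-- The hyperbolic distance on the unit disc, induced by the Riemannian metric
`2|dz|/(1-|z|²)`. -/
noncomputable def hdist (z w : ℂ) : ℝ :=
  2 * artanh ‖(z - w) / (1 - (starRingEnd ℂ) w * z)‖

/-- Left compositions: `leftComp f n = f (n-1) ∘ ⋯ ∘ f 1 ∘ f 0`, so that `f k`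
plays the role of the `(k+1)`-st map `f_{k+1}` of the sequence. -/
def leftComp (f : ℕ → ℂ → ℂ) : ℕ → ℂ → ℂ
  | 0 => id
  | n + 1 => f n ∘ leftComp f n

/-- Right compositions: `rightComp g n = g 0 ∘ g 1 ∘ ⋯ ∘ g (n-1)`, so that `g k`
plays the role of the `(k+1)`-st map `g_{k+1}` of the sequence. -/
def rightComp (g : ℕ → ℂ → ℂ) : ℕ → ℂ → ℂ
  | 0 => id
  | n + 1 => rightComp g n ∘ g n

/-- compatibility: the complex absolute value as an `AbsoluteValue`. -/
noncomputable def Complex.abs : AbsoluteValue ℂ ℝ where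
  toFun z := ‖z‖
  map_mul' := norm_mul
  nonneg' := norm_nonneg
  eq_zero' _ := norm_eq_zero
  add_le' := norm_add_le

@[simp] lemma Complex.norm_eq_abs' (z : ℂ) : ‖z‖ = Complex.abs z := rfl

lemma Complex.abs_apply' (z : ℂ) : Complex.abs z = ‖z‖ := rfl

@[simp] lemma Complex.abs_conj (z : ℂ) : Complex.abs ((starRingEnd ℂ) z) = Complex.abs z :=
  Complex.norm_conj z

@[simp] lemma Complex.abs_ofReal (r : ℝ) : Complex.abs (r : ℂ) = |r| := Complex.norm_real r

lemma Complex.sq_abs (z : ℂ) : Complex.abs z ^ 2 = Complex.normSq z := Complex.sq_norm z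

lemma Complex.abs_re_le_abs (z : ℂ) : |z.re| ≤ Complex.abs z := Complex.abs_re_le_norm z

noncomputable section

namespace StabAux

local notation "conj'" => (starRingEnd ℂ)

/-- pseudo-hyperbolic distance -/
def pd (z w : ℂ) : ℝ := Complex.abs ((z - w) / (1 - conj' w * z))

lemma hdist_eq (z w : ℂ) : hdist z w = 2 * artanh (pd z w) := rfl

lemma mem_unitDisc {z : ℂ} : z ∈ unitDisc ↔ Complex.abs z < 1 := Iff.rfl

lemma unitDisc_eq_ball : unitDisc = Metric.ball (0 : ℂ) 1 := by
  ext z; simp [unitDisc, Complex.dist_eq]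

lemma isOpen_unitDisc : IsOpen unitDisc := by
  rw [unitDisc_eq_ball]; exact Metric.isOpen_ball

lemma normSq_key (z w : ℂ) :
    Complex.normSq (1 - conj' w * z) - Complex.normSq (z - w)
      = (1 - Complex.normSq z) * (1 - Complex.normSq w) := by
  simp only [Complex.normSq_apply, Complex.sub_re, Complex.sub_im, Complex.mul_re,
    Complex.mul_im, Complex.conj_re, Complex.conj_im, Complex.one_re, Complex.one_im]
  ring

lemma abs_mul_abs_lt_one {z w : ℂ} (hz : Complex.abs z < 1) (hw : Complex.abs w < 1) :
    Complex.abs w * Complex.abs z < 1 := by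
  nlinarith [Complex.abs.nonneg z, Complex.abs.nonneg w]

lemma denom_lb {z w : ℂ} :
    1 - Complex.abs w * Complex.abs z ≤ Complex.abs (1 - conj' w * z) := by
  have h := Complex.abs.add_le (1 - conj' w * z) (conj' w * z)
  simp only [sub_add_cancel, map_one, map_mul, Complex.abs_conj] at h
  linarith [h]

lemma denom_ub (z w : ℂ) :
    Complex.abs (1 - conj' w * z) ≤ 1 + Complex.abs w * Complex.abs z := by
  calc Complex.abs (1 - conj' w * z) ≤ Complex.abs 1 + Complex.abs (conj' w * z) := by
        simpa using Complex.abs.sub_le_add 1 (conj' w * z)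
    _ = 1 + Complex.abs w * Complex.abs z := by simp [map_mul, Complex.abs_conj]

lemma denom_pos {z w : ℂ} (hz : Complex.abs z < 1) (hw : Complex.abs w < 1) :
    0 < Complex.abs (1 - conj' w * z) :=
  lt_of_lt_of_le (by nlinarith [abs_mul_abs_lt_one hz hw]) denom_lb

lemma denom_ne_zero {z w : ℂ} (hz : Complex.abs z < 1) (hw : Complex.abs w < 1) :
    (1 : ℂ) - conj' w * z ≠ 0 := by
  intro h
  have := denom_pos hz hw
  rw [h] at this; simp at this

lemma pd_nonneg (z w : ℂ) : 0 ≤ pd z w := Complex.abs.nonneg _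

lemma pd_self (z : ℂ) : pd z z = 0 := by simp [pd]

lemma pd_comm (z w : ℂ) : pd z w = pd w z := by
  unfold pd
  rw [map_div₀, map_div₀]
  congr 1
  · exact Complex.abs.map_sub z w
  · have h : conj' (1 - conj' w * z) = 1 - conj' z * w := by
      simp only [map_sub, map_mul, map_one, Complex.conj_conj]; ring
    rw [← Complex.abs_conj (1 - conj' w * z), h]

lemma sq_abs' (z : ℂ) : Complex.abs z ^ 2 = Complex.normSq z := by
  rw [Complex.sq_abs]

lemma pd_lt_one {z w : ℂ} (hz : Complex.abs z < 1) (hw : Complex.abs w < 1) :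
    pd z w < 1 := by
  unfold pd
  rw [map_div₀, div_lt_one (denom_pos hz hw)]
  have key := normSq_key z w
  have h1 : Complex.normSq z < 1 := by rw [← sq_abs']; nlinarith [Complex.abs.nonneg z]
  have h2 : Complex.normSq w < 1 := by rw [← sq_abs']; nlinarith [Complex.abs.nonneg w]
  have : Complex.normSq (z - w) < Complex.normSq (1 - conj' w * z) := by nlinarith
  rw [← sq_abs', ← sq_abs'] at this
  exact lt_of_pow_lt_pow_left₀ 2 (Complex.abs.nonneg _) this

lemma pd_lt_one' {z w : ℂ} (hz : z ∈ unitDisc) (hw : w ∈ unitDisc) : pd z w < 1 :=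
  pd_lt_one hz hw

lemma abs_sub_le_two_pd {z w : ℂ} (hz : Complex.abs z < 1) (hw : Complex.abs w < 1) :
    Complex.abs (z - w) ≤ 2 * pd z w := by
  have hd := denom_pos hz hw
  have hub := denom_ub z w
  have h2 : Complex.abs (1 - conj' w * z) ≤ 2 := by
    nlinarith [Complex.abs.nonneg z, Complex.abs.nonneg w]
  unfold pd
  rw [map_div₀]
  calc Complex.abs (z - w)
      = Complex.abs (z - w) / Complex.abs (1 - conj' w * z)
        * Complex.abs (1 - conj' w * z) := (div_mul_cancel₀ _ hd.ne').symm
    _ ≤ Complex.abs (z - w) / Complex.abs (1 - conj' w * z) * 2 := by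
        apply mul_le_mul_of_nonneg_left h2
        exact div_nonneg (Complex.abs.nonneg _) hd.le
    _ = 2 * (Complex.abs (z - w) / Complex.abs (1 - conj' w * z)) := by ring

lemma dist_le_two_pd {z w : ℂ} (hz : Complex.abs z < 1) (hw : Complex.abs w < 1) :
    dist z w ≤ 2 * pd z w := by
  rw [Complex.dist_eq]; exact abs_sub_le_two_pd hz hw

/-- boundary: if `|x| = 1` then `pd x a = 1`. -/
lemma pd_eq_one_of_boundary {x a : ℂ} (hx : Complex.abs x = 1) (ha : Complex.abs a < 1) :
    pd x a = 1 := by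
  have hd : 0 < Complex.abs (1 - conj' a * x) := by
    have := denom_lb (z := x) (w := a)
    nlinarith
  unfold pd
  rw [map_div₀, div_eq_one_iff_eq hd.ne']
  have key := normSq_key x a
  have hx2 : Complex.normSq x = 1 := by rw [← sq_abs', hx]; norm_num
  have : Complex.normSq (x - a) = Complex.normSq (1 - conj' a * x) := by
    rw [hx2] at key; nlinarith
  rw [← sq_abs', ← sq_abs'] at this
  nlinarith [Complex.abs.nonneg (x - a), Complex.abs.nonneg (1 - conj' a * x)]

/-! ### Möbius maps -/

def mobius (w z : ℂ) : ℂ := (z - w) / (1 - conj' w * z)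

lemma pd_eq_abs_mobius (z w : ℂ) : pd z w = Complex.abs (mobius w z) := rfl

lemma mobius_self (w : ℂ) : mobius w w = 0 := by simp [mobius]

lemma mobius_mem {w z : ℂ} (hw : w ∈ unitDisc) (hz : z ∈ unitDisc) :
    mobius w z ∈ unitDisc := pd_lt_one hz hw

lemma mobius_mapsTo {w : ℂ} (hw : w ∈ unitDisc) :
    Set.MapsTo (mobius w) unitDisc unitDisc := fun _ hz => mobius_mem hw hz

lemma mobius_diffOn {w : ℂ} (hw : w ∈ unitDisc) :
    DifferentiableOn ℂ (mobius w) unitDisc := by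
  intro z hz
  apply DifferentiableAt.differentiableWithinAt
  apply DifferentiableAt.div
  · exact (differentiable_id.sub_const w).differentiableAt
  · exact (differentiableAt_const _).sub ((differentiableAt_const _).mul differentiableAt_id)
  · exact denom_ne_zero hz hw

lemma mobius_neg_apply (w z : ℂ) : mobius (-w) z = (z + w) / (1 + conj' w * z) := by
  simp [mobius, sub_neg_eq_add, map_neg]

lemma one_sub_conj_mul_self_ne {w : ℂ} (hw : w ∈ unitDisc) :
    (1 : ℂ) - conj' w * w ≠ 0 := by
  intro h
  have h1 : conj' w * w = 1 := by linear_combination -h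
  have h2 := congrArg Complex.abs h1
  rw [map_mul, Complex.abs_conj, map_one] at h2
  have : Complex.abs w < 1 := hw
  nlinarith [Complex.abs.nonneg w]

lemma mobius_inv {w z : ℂ} (hw : w ∈ unitDisc) (hz : z ∈ unitDisc) :
    mobius (-w) (mobius w z) = z := by
  have hd : (1 : ℂ) - conj' w * z ≠ 0 := denom_ne_zero hz hw
  have hww : (1 : ℂ) - conj' w * w ≠ 0 := one_sub_conj_mul_self_ne hw
  have key : (1 : ℂ) + conj' w * ((z - w) / (1 - conj' w * z))
      = (1 - conj' w * w) / (1 - conj' w * z) := by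
    field_simp; ring
  rw [mobius_neg_apply, mobius, key, div_eq_iff (div_ne_zero hww hd)]
  have hd' : (1 : ℂ) - z * conj' w ≠ 0 := by rwa [mul_comm]
  field_simp
  ring

lemma mobius_neg_zero (w : ℂ) : mobius (-w) 0 = w := by
  simp [mobius_neg_apply]


/-! ### Möbius identities and invariance -/

lemma one_sub_conj_mul_self_eq (w : ℂ) :
    (1 : ℂ) - conj' w * w = ((1 - Complex.normSq w : ℝ) : ℂ) := by
  rw [mul_comm, Complex.mul_conj]
  push_cast
  ring

lemma abs_one_sub_conj_mul_self_le {w : ℂ} (hw : w ∈ unitDisc) :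
    Complex.abs (1 - conj' w * w) ≤ 1 := by
  rw [one_sub_conj_mul_self_eq, Complex.abs_ofReal]
  have h1 : Complex.normSq w < 1 := by
    rw [← sq_abs']
    have : Complex.abs w < 1 := hw
    nlinarith [Complex.abs.nonneg w]
  have h2 : 0 ≤ Complex.normSq w := Complex.normSq_nonneg w
  rw [_root_.abs_of_nonneg (by linarith)]
  linarith

lemma mobius_sub {w u v : ℂ} (hw : w ∈ unitDisc) (hu : u ∈ unitDisc) (hv : v ∈ unitDisc) :
    mobius w u - mobius w v
      = ((1 - conj' w * w) * (u - v)) / ((1 - conj' w * u) * (1 - conj' w * v)) := by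
  have h1 := denom_ne_zero (z := u) (w := w) hu hw
  have h2 := denom_ne_zero (z := v) (w := w) hv hw
  unfold mobius
  have h1' : (1 : ℂ) - u * conj' w ≠ 0 := by rwa [mul_comm]
  have h2' : (1 : ℂ) - v * conj' w ≠ 0 := by rwa [mul_comm]
  field_simp
  ring

lemma conj_mobius (w v : ℂ) :
    conj' (mobius w v) = (conj' v - conj' w) / (1 - w * conj' v) := by
  unfold mobius
  rw [map_div₀]
  simp only [map_sub, map_mul, map_one, Complex.conj_conj]

lemma one_sub_conj_mobius {w u v : ℂ} (hw : w ∈ unitDisc) (hu : u ∈ unitDisc)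
    (hv : v ∈ unitDisc) :
    (1 : ℂ) - conj' (mobius w v) * mobius w u
      = ((1 - conj' w * w) * (1 - conj' v * u)) / ((1 - w * conj' v) * (1 - conj' w * u)) := by
  have h1 := denom_ne_zero (z := u) (w := w) hu hw
  have h2 : (1 : ℂ) - w * conj' v ≠ 0 := by
    intro h
    apply denom_ne_zero (z := v) (w := w) hv hw
    have := congrArg conj' h
    simpa only [map_sub, map_mul, map_one, Complex.conj_conj, map_zero] using this
  rw [conj_mobius]
  unfold mobius
  have h1' : (1 : ℂ) - u * conj' w ≠ 0 := by rwa [mul_comm]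
  have h2' : (1 : ℂ) - conj' v * w ≠ 0 := by rwa [mul_comm]
  field_simp
  ring

lemma abs_one_sub_swap (w v : ℂ) :
    Complex.abs (1 - w * conj' v) = Complex.abs (1 - conj' w * v) := by
  rw [← Complex.abs_conj (1 - w * conj' v)]
  simp only [map_sub, map_mul, map_one, Complex.conj_conj]

lemma pd_mobius {w u v : ℂ} (hw : w ∈ unitDisc) (hu : u ∈ unitDisc) (hv : v ∈ unitDisc) :
    pd (mobius w u) (mobius w v) = pd u v := by
  have h1 := denom_ne_zero (z := u) (w := w) hu hw
  have h2 := denom_ne_zero (z := v) (w := w) hv hw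
  have h3 := denom_ne_zero (z := u) (w := v) hu hv
  have h4 : (1 : ℂ) - conj' w * w ≠ 0 := one_sub_conj_mul_self_ne hw
  unfold pd
  rw [mobius_sub hw hu hv, one_sub_conj_mobius hw hu hv]
  rw [div_div_div_eq]
  rw [map_div₀, map_mul, map_mul, map_mul, map_mul, map_div₀]
  rw [abs_one_sub_swap w v]
  have a1 : Complex.abs (1 - conj' w * w) ≠ 0 := by
    simp only [ne_eq, map_eq_zero]; exact h4
  have a2 : Complex.abs (1 - conj' w * u) ≠ 0 := by
    simp only [ne_eq, map_eq_zero]; exact h1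
  have a3 : Complex.abs (1 - conj' w * v) ≠ 0 := by
    simp only [ne_eq, map_eq_zero]; exact h2
  have a4 : Complex.abs (1 - conj' v * u) ≠ 0 := by
    simp only [ne_eq, map_eq_zero]; exact h3
  simp only [map_div₀, map_mul]
  generalize Complex.abs (1 - conj' w * w) = A at *
  generalize Complex.abs (1 - conj' w * u) = B at *
  generalize Complex.abs (1 - conj' w * v) = C at *
  generalize Complex.abs (1 - conj' v * u) = D at *
  field_simp

/-! ### Schwarz–Pick -/

lemma schwarz_pick {h : ℂ → ℂ} (hd : DifferentiableOn ℂ h unitDisc)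
    (hm : MapsTo h unitDisc unitDisc) {z w : ℂ} (hz : z ∈ unitDisc) (hw : w ∈ unitDisc) :
    pd (h z) (h w) ≤ pd z w := by
  have hnegw : -w ∈ unitDisc := by
    have : Complex.abs w < 1 := hw
    simpa [mem_unitDisc] using this
  set H : ℂ → ℂ := fun ζ => mobius (h w) (h (mobius (-w) ζ)) with hH
  have hH0 : H 0 = 0 := by
    simp only [hH, mobius_neg_zero, mobius_self]
  have hHd : DifferentiableOn ℂ H unitDisc := by
    apply DifferentiableOn.comp (mobius_diffOn (hm hw))
    · exact DifferentiableOn.comp hd (mobius_diffOn hnegw) (mobius_mapsTo hnegw)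
    · exact (hm.comp (mobius_mapsTo hnegw))
  have hHm : MapsTo H unitDisc unitDisc :=
    (mobius_mapsTo (hm hw)).comp (hm.comp (mobius_mapsTo hnegw))
  have key : ∀ ζ : ℂ, Complex.abs ζ < 1 → Complex.abs (H ζ) ≤ Complex.abs ζ := by
    intro ζ hζ
    show ‖H ζ‖ ≤ ‖ζ‖
    apply Complex.norm_le_norm_of_mapsTo_ball
    · rw [← unitDisc_eq_ball]; exact hHd
    · exact fun x hx => Metric.ball_subset_closedBall (by rw [← unitDisc_eq_ball] at hx ⊢; exact hHm hx)
    · exact hH0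
    · exact hζ
  have hmwz : mobius w z ∈ unitDisc := mobius_mem hw hz
  have := key (mobius w z) hmwz
  rw [hH] at this
  simp only at this
  rw [mobius_inv hw hz] at this
  calc pd (h z) (h w) = Complex.abs (mobius (h w) (h z)) := rfl
    _ ≤ Complex.abs (mobius w z) := this
    _ = pd z w := rfl

/-! ### mobAdd and triangle inequalities -/

def mobAdd (p q : ℝ) : ℝ := (p + q) / (1 + p * q)

lemma mobAdd_nonneg {p q : ℝ} (hp : 0 ≤ p) (hq : 0 ≤ q) : 0 ≤ mobAdd p q := by
  unfold mobAdd
  positivity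

lemma mobAdd_lt_one {p q : ℝ} (hp : 0 ≤ p) (hp1 : p < 1) (hq : 0 ≤ q) (hq1 : q < 1) :
    mobAdd p q < 1 := by
  unfold mobAdd
  rw [div_lt_one (by nlinarith)]
  nlinarith

lemma mobAdd_le_add {p q : ℝ} (hp : 0 ≤ p) (hq : 0 ≤ q) : mobAdd p q ≤ p + q := by
  unfold mobAdd
  rw [div_le_iff₀ (by nlinarith)]
  nlinarith [mul_nonneg (add_nonneg hp hq) (mul_nonneg hp hq)]

lemma mobAdd_mono {p p' q q' : ℝ} (hp : 0 ≤ p) (hq : 0 ≤ q)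
    (hpp : p ≤ p') (hqq : q ≤ q') (hp1 : p' < 1) (hq1 : q' < 1) :
    mobAdd p q ≤ mobAdd p' q' := by
  unfold mobAdd
  rw [div_le_div_iff₀ (by nlinarith) (by nlinarith)]
  nlinarith [mul_nonneg (sub_nonneg.2 hpp) (by nlinarith : (0:ℝ) ≤ 1 - q * q'),
    mul_nonneg (sub_nonneg.2 hqq) (by nlinarith : (0:ℝ) ≤ 1 - p * p')]

lemma normSq_sub' (x y : ℂ) :
    Complex.normSq (x - y) = Complex.normSq x + Complex.normSq y - 2 * (conj' y * x).re := by
  simp only [Complex.normSq_apply, Complex.sub_re, Complex.sub_im, Complex.mul_re,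
    Complex.mul_im, Complex.conj_re, Complex.conj_im]
  ring

lemma normSq_one_sub' (x y : ℂ) :
    Complex.normSq (1 - conj' y * x)
      = 1 + Complex.normSq x * Complex.normSq y - 2 * (conj' y * x).re := by
  simp only [Complex.normSq_apply, Complex.sub_re, Complex.sub_im, Complex.mul_re,
    Complex.mul_im, Complex.conj_re, Complex.conj_im, Complex.one_re, Complex.one_im]
  ring

lemma pd_le_mobAdd_abs {x y : ℂ} (hx : x ∈ unitDisc) (hy : y ∈ unitDisc) :
    pd x y ≤ mobAdd (Complex.abs x) (Complex.abs y) := by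
  set X := Complex.abs x with hX
  set Y := Complex.abs y with hY
  have hX0 : 0 ≤ X := Complex.abs.nonneg x
  have hY0 : 0 ≤ Y := Complex.abs.nonneg y
  have hX1 : X < 1 := hx
  have hY1 : Y < 1 := hy
  set s := (conj' y * x).re with hs
  have hs_lb : -(X * Y) ≤ s := by
    have h1 : |s| ≤ Complex.abs (conj' y * x) := Complex.abs_re_le_abs _
    rw [map_mul, Complex.abs_conj] at h1
    have := neg_abs_le s
    calc -(X * Y) = -(Complex.abs y * Complex.abs x) := by rw [hX, hY]; ring
      _ ≤ -|s| := by linarith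
      _ ≤ s := neg_abs_le s
  have hd := denom_pos (z := x) (w := y) hX1 hY1
  have key1 : Complex.normSq (x - y) = X ^ 2 + Y ^ 2 - 2 * s := by
    rw [normSq_sub', ← sq_abs', ← sq_abs']
  have key2 : Complex.normSq (1 - conj' y * x) = 1 + X ^ 2 * Y ^ 2 - 2 * s := by
    rw [normSq_one_sub', ← sq_abs', ← sq_abs']
  have sq_ineq : Complex.normSq (x - y) * (1 + X * Y) ^ 2
      ≤ (X + Y) ^ 2 * Complex.normSq (1 - conj' y * x) := by
    rw [key1, key2]
    nlinarith [mul_nonneg (mul_nonneg (by linarith : (0:ℝ) ≤ s + X * Y)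
      (by nlinarith : (0:ℝ) ≤ 1 - X ^ 2)) (by nlinarith : (0:ℝ) ≤ 1 - Y ^ 2)]
  unfold pd mobAdd
  rw [map_div₀, div_le_div_iff₀ hd (by nlinarith)]
  have habs1 : 0 ≤ Complex.abs (x - y) := Complex.abs.nonneg _
  have hsq1 : Complex.abs (x - y) ^ 2 = Complex.normSq (x - y) := sq_abs' _
  have hsq2 : Complex.abs (1 - conj' y * x) ^ 2 = Complex.normSq (1 - conj' y * x) := sq_abs' _
  nlinarith [sq_ineq, mul_nonneg (mul_nonneg hX0 hY0) habs1,
    mul_nonneg (add_nonneg hX0 hY0) hd.le]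

lemma pd_triangle_mob {u v w : ℂ} (hu : u ∈ unitDisc) (hv : v ∈ unitDisc)
    (hw : w ∈ unitDisc) : pd u w ≤ mobAdd (pd u v) (pd v w) := by
  have h1 : pd u w = pd (mobius v u) (mobius v w) := (pd_mobius hv hu hw).symm
  have h2 : pd (mobius v u) (mobius v w)
      ≤ mobAdd (Complex.abs (mobius v u)) (Complex.abs (mobius v w)) :=
    pd_le_mobAdd_abs (mobius_mem hv hu) (mobius_mem hv hw)
  rw [h1]
  have e1 : Complex.abs (mobius v u) = pd u v := rfl
  have e2 : Complex.abs (mobius v w) = pd w v := rfl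
  rw [e1, e2, pd_comm w v] at h2
  exact h2

lemma pd_triangle {u v w : ℂ} (hu : u ∈ unitDisc) (hv : v ∈ unitDisc) (hw : w ∈ unitDisc) :
    pd u w ≤ pd u v + pd v w :=
  (pd_triangle_mob hu hv hw).trans (mobAdd_le_add (pd_nonneg _ _) (pd_nonneg _ _))

/-! ### artanh facts -/

lemma artanh_zero : artanh 0 = 0 := by simp [artanh]

lemma artanh_nonneg {x : ℝ} (h0 : 0 ≤ x) (h1 : x < 1) : 0 ≤ artanh x := by
  unfold artanh
  have : (1 : ℝ) ≤ (1 + x) / (1 - x) := by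
    rw [le_div_iff₀ (by linarith)]; linarith
  have := Real.log_nonneg this
  linarith

lemma artanh_mono {x y : ℝ} (h0 : 0 ≤ x) (hxy : x ≤ y) (h1 : y < 1) :
    artanh x ≤ artanh y := by
  unfold artanh
  have h2 : (0:ℝ) < (1 + x) / (1 - x) := by
    apply div_pos <;> linarith
  have h3 : (1 + x) / (1 - x) ≤ (1 + y) / (1 - y) := by
    rw [div_le_div_iff₀ (by linarith) (by linarith)]
    nlinarith
  have := Real.log_le_log h2 h3
  linarith

lemma self_le_two_artanh {x : ℝ} (h0 : 0 ≤ x) (h1 : x < 1) : x ≤ 2 * artanh x := by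
  unfold artanh
  have hlog1 : Real.log (1 - x) ≤ -x := by
    have := Real.log_le_sub_one_of_pos (by linarith : (0:ℝ) < 1 - x)
    linarith
  have hlog2 : 0 ≤ Real.log (1 + x) := Real.log_nonneg (by linarith)
  have hsplit : Real.log ((1 + x) / (1 - x)) = Real.log (1 + x) - Real.log (1 - x) :=
    Real.log_div (by linarith) (by linarith)
  rw [hsplit]
  linarith

lemma two_artanh_le {x : ℝ} (h0 : 0 ≤ x) (h1 : x < 1) :
    2 * artanh x ≤ 2 * x / (1 - x) := by
  unfold artanh
  have hpos : (0:ℝ) < (1 + x) / (1 - x) := div_pos (by linarith) (by linarith)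
  have hlog := Real.log_le_sub_one_of_pos hpos
  have heq : (1 + x) / (1 - x) - 1 = 2 * x / (1 - x) := by
    rw [div_sub_one (by linarith : (1:ℝ) - x ≠ 0)]
    ring_nf
  linarith

lemma artanh_mobAdd {p q : ℝ} (hp0 : 0 ≤ p) (hp1 : p < 1) (hq0 : 0 ≤ q) (hq1 : q < 1) :
    artanh (mobAdd p q) = artanh p + artanh q := by
  unfold artanh
  have harg : (1 + mobAdd p q) / (1 - mobAdd p q)
      = ((1 + p) / (1 - p)) * ((1 + q) / (1 - q)) := by
    unfold mobAdd
    have hden : (0:ℝ) < 1 + p * q := by nlinarith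
    field_simp
    ring
  rw [harg, Real.log_mul
    (ne_of_gt (div_pos (by linarith) (by linarith)))
    (ne_of_gt (div_pos (by linarith) (by linarith)))]
  ring

/-! ### hdist facts -/

lemma hdist_self (z : ℂ) : hdist z z = 0 := by
  rw [hdist_eq, pd_self, artanh_zero]; ring

lemma hdist_nonneg' {u v : ℂ} (hu : u ∈ unitDisc) (hv : v ∈ unitDisc) : 0 ≤ hdist u v := by
  rw [hdist_eq]
  have := artanh_nonneg (pd_nonneg u v) (pd_lt_one' hu hv)
  linarith

lemma pd_le_hdist {u v : ℂ} (hu : u ∈ unitDisc) (hv : v ∈ unitDisc) : pd u v ≤ hdist u v := by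
  rw [hdist_eq]
  exact self_le_two_artanh (pd_nonneg u v) (pd_lt_one' hu hv)

lemma hdist_triangle' {u v w : ℂ} (hu : u ∈ unitDisc) (hv : v ∈ unitDisc) (hw : w ∈ unitDisc) :
    hdist u w ≤ hdist u v + hdist v w := by
  rw [hdist_eq, hdist_eq, hdist_eq]
  have h1 : pd u w ≤ mobAdd (pd u v) (pd v w) := pd_triangle_mob hu hv hw
  have h2 : artanh (pd u w) ≤ artanh (mobAdd (pd u v) (pd v w)) :=
    artanh_mono (pd_nonneg _ _) h1
      (mobAdd_lt_one (pd_nonneg _ _) (pd_lt_one' hu hv) (pd_nonneg _ _) (pd_lt_one' hv hw))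
  rw [artanh_mobAdd (pd_nonneg _ _) (pd_lt_one' hu hv) (pd_nonneg _ _) (pd_lt_one' hv hw)] at h2
  linarith

lemma hdist_schwarz_pick {h : ℂ → ℂ} (hd : DifferentiableOn ℂ h unitDisc)
    (hm : MapsTo h unitDisc unitDisc) {z w : ℂ} (hz : z ∈ unitDisc) (hw : w ∈ unitDisc) :
    hdist (h z) (h w) ≤ hdist z w := by
  rw [hdist_eq, hdist_eq]
  have := artanh_mono (pd_nonneg (h z) (h w)) (schwarz_pick hd hm hz hw) (pd_lt_one' hz hw)
  linarith

lemma pd_le_of_hdist_le {u v : ℂ} (hu : u ∈ unitDisc) (hv : v ∈ unitDisc) {B : ℝ}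
    (hB : hdist u v ≤ B) : pd u v ≤ (Real.exp B - 1) / (Real.exp B + 1) := by
  set p := pd u v with hp
  have hp0 : 0 ≤ p := pd_nonneg u v
  have hp1 : p < 1 := pd_lt_one' hu hv
  have h1 : Real.log ((1 + p) / (1 - p)) ≤ B := by
    rw [hdist_eq] at hB
    unfold artanh at hB
    linarith
  have h2 : (1 + p) / (1 - p) ≤ Real.exp B := by
    rw [← Real.exp_log (div_pos (by linarith) (by linarith) : (0:ℝ) < (1 + p) / (1 - p))]
    exact Real.exp_le_exp.mpr h1
  have h3 : 1 + p ≤ Real.exp B * (1 - p) := by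
    rw [div_le_iff₀ (by linarith)] at h2
    linarith
  have hE : 0 < Real.exp B := Real.exp_pos B
  rw [le_div_iff₀ (by linarith)]
  nlinarith

lemma hdist_le_four_mul {u v : ℂ} (hu : u ∈ unitDisc) (hv : v ∈ unitDisc) {c : ℝ}
    (hc : pd u v ≤ c) (hc2 : c ≤ 1 / 2) : hdist u v ≤ 4 * c := by
  rw [hdist_eq]
  have hp0 : 0 ≤ pd u v := pd_nonneg u v
  have hp1 : pd u v < 1 := pd_lt_one' hu hv
  have h1 := two_artanh_le hp0 hp1
  have h2 : 2 * pd u v / (1 - pd u v) ≤ 4 * c := by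
    rw [div_le_iff₀ (by linarith)]
    nlinarith
  linarith

/-! ### Euclidean Lipschitz estimates for Möbius maps -/

lemma mobius_lip1 {w u v : ℂ} (hw : w ∈ unitDisc) (hu : u ∈ unitDisc) (hv : v ∈ unitDisc) :
    Complex.abs (mobius w u - mobius w v)
      ≤ Complex.abs (u - v)
        / ((1 - Complex.abs w * Complex.abs u) * (1 - Complex.abs w * Complex.abs v)) := by
  rw [mobius_sub hw hu hv, map_div₀, map_mul, map_mul]
  have d1 : (0:ℝ) < 1 - Complex.abs w * Complex.abs u := by
    have := abs_mul_abs_lt_one (show Complex.abs u < 1 from hu) (show Complex.abs w < 1 from hw)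
    linarith
  have d2 : (0:ℝ) < 1 - Complex.abs w * Complex.abs v := by
    have := abs_mul_abs_lt_one (show Complex.abs v < 1 from hv) (show Complex.abs w < 1 from hw)
    linarith
  apply div_le_div₀ (Complex.abs.nonneg _) _ (by positivity)
  · exact mul_le_mul denom_lb denom_lb d2.le (Complex.abs.nonneg _)
  · calc Complex.abs (1 - conj' w * w) * Complex.abs (u - v)
        ≤ 1 * Complex.abs (u - v) :=
          mul_le_mul_of_nonneg_right (abs_one_sub_conj_mul_self_le hw) (Complex.abs.nonneg _)
      _ = Complex.abs (u - v) := one_mul _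

lemma mobius_param_sub {w w' v : ℂ} (hw : w ∈ unitDisc) (hw' : w' ∈ unitDisc)
    (hv : v ∈ unitDisc) :
    mobius w v - mobius w' v
      = ((w' - w) + v * v * (conj' w - conj' w') + v * (w * conj' w' - w' * conj' w))
        / ((1 - conj' w * v) * (1 - conj' w' * v)) := by
  have h1 := denom_ne_zero (z := v) (w := w) hv hw
  have h2 := denom_ne_zero (z := v) (w := w') hv hw'
  unfold mobius
  have h1' : (1 : ℂ) - v * conj' w ≠ 0 := by rwa [mul_comm]
  have h2' : (1 : ℂ) - v * conj' w' ≠ 0 := by rwa [mul_comm]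
  field_simp
  ring

lemma mobius_lip2 {w w' v : ℂ} (hw : w ∈ unitDisc) (hw' : w' ∈ unitDisc) (hv : v ∈ unitDisc) :
    Complex.abs (mobius w v - mobius w' v)
      ≤ 4 * Complex.abs (w - w')
        / ((1 - Complex.abs w * Complex.abs v) * (1 - Complex.abs w' * Complex.abs v)) := by
  rw [mobius_param_sub hw hw' hv, map_div₀, map_mul]
  have d1 : (0:ℝ) < 1 - Complex.abs w * Complex.abs v := by
    have := abs_mul_abs_lt_one (show Complex.abs v < 1 from hv) (show Complex.abs w < 1 from hw)
    linarith
  have d2 : (0:ℝ) < 1 - Complex.abs w' * Complex.abs v := by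
    have := abs_mul_abs_lt_one (show Complex.abs v < 1 from hv) (show Complex.abs w' < 1 from hw')
    linarith
  apply div_le_div₀ (by positivity) _ (by positivity)
  · exact mul_le_mul denom_lb denom_lb d2.le (Complex.abs.nonneg _)
  · -- numerator bound
    have hv1 : Complex.abs v ≤ 1 := le_of_lt hv
    have hw1 : Complex.abs w ≤ 1 := le_of_lt hw
    have hcross : Complex.abs (w * conj' w' - w' * conj' w) ≤ 2 * Complex.abs (w - w') := by
      have e : w * conj' w' - w' * conj' w
          = w * (conj' w' - conj' w) + conj' w * (w - w') := by ring
      rw [e]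
      calc Complex.abs (w * (conj' w' - conj' w) + conj' w * (w - w'))
          ≤ Complex.abs (w * (conj' w' - conj' w)) + Complex.abs (conj' w * (w - w')) :=
            Complex.abs.add_le _ _
        _ = Complex.abs w * Complex.abs (conj' (w' - w)) + Complex.abs w * Complex.abs (w - w') := by
            rw [map_mul, map_mul, Complex.abs_conj]
            simp only [map_sub]
        _ = Complex.abs w * Complex.abs (w' - w) + Complex.abs w * Complex.abs (w - w') := by
            rw [Complex.abs_conj]
        _ = Complex.abs w * Complex.abs (w - w') + Complex.abs w * Complex.abs (w - w') := by
            rw [Complex.abs.map_sub w' w]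
        _ ≤ 2 * Complex.abs (w - w') := by nlinarith [Complex.abs.nonneg (w - w')]
    calc Complex.abs (w' - w + v * v * (conj' w - conj' w') + v * (w * conj' w' - w' * conj' w))
        ≤ Complex.abs (w' - w + v * v * (conj' w - conj' w'))
            + Complex.abs (v * (w * conj' w' - w' * conj' w)) := Complex.abs.add_le _ _
      _ ≤ Complex.abs (w' - w) + Complex.abs (v * v * (conj' w - conj' w'))
            + Complex.abs (v * (w * conj' w' - w' * conj' w)) := by
          linarith [Complex.abs.add_le (w' - w) (v * v * (conj' w - conj' w'))]
      _ ≤ Complex.abs (w - w') + Complex.abs (w - w') + 2 * Complex.abs (w - w') := by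
          have b1 : Complex.abs (w' - w) = Complex.abs (w - w') := Complex.abs.map_sub w' w
          have b2 : Complex.abs (v * v * (conj' w - conj' w')) ≤ Complex.abs (w - w') := by
            rw [map_mul, map_mul]
            have : Complex.abs (conj' w - conj' w') = Complex.abs (w - w') := by
              rw [← map_sub, Complex.abs_conj]
            rw [this]
            have hvv : Complex.abs v * Complex.abs v ≤ 1 :=
              mul_le_one₀ hv1 (Complex.abs.nonneg v) hv1
            nlinarith [mul_le_mul_of_nonneg_right hvv (Complex.abs.nonneg (w - w'))]
          have b3 : Complex.abs (v * (w * conj' w' - w' * conj' w))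
              ≤ 2 * Complex.abs (w - w') := by
            rw [map_mul]
            calc Complex.abs v * Complex.abs (w * conj' w' - w' * conj' w)
                ≤ 1 * Complex.abs (w * conj' w' - w' * conj' w) :=
                  mul_le_mul_of_nonneg_right hv1 (Complex.abs.nonneg _)
              _ = Complex.abs (w * conj' w' - w' * conj' w) := one_mul _
              _ ≤ 2 * Complex.abs (w - w') := hcross
          linarith
      _ = 4 * Complex.abs (w - w') := by ring


/-! ### helpers for the key lemma -/

lemma pd_le_abs_sub_div {X V : ℂ} (hX : Complex.abs X ≤ 1) (hV : Complex.abs V < 1) :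
    pd X V ≤ Complex.abs (X - V) / (1 - Complex.abs V) := by
  unfold pd
  rw [map_div₀]
  have h1 : (0:ℝ) < 1 - Complex.abs V := by linarith
  have h2 : 1 - Complex.abs V ≤ Complex.abs (1 - conj' V * X) := by
    have := denom_lb (z := X) (w := V)
    nlinarith [Complex.abs.nonneg V, Complex.abs.nonneg X]
  exact div_le_div_of_nonneg_left (Complex.abs.nonneg _) h1 h2

lemma one_sub_abs_le_abs_one_sub (V : ℂ) : 1 - Complex.abs V ≤ Complex.abs (1 - V) := by
  have := Complex.abs.add_le (1 - V) V
  simp only [sub_add_cancel, map_one] at this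
  linarith

lemma abs_one_sub_conj_self_le {V : ℂ} (hV : Complex.abs V < 1) :
    Complex.abs (1 - conj' V * V) ≤ 2 * (1 - Complex.abs V) := by
  rw [one_sub_conj_mul_self_eq, Complex.abs_ofReal]
  have h1 : Complex.normSq V = Complex.abs V ^ 2 := (sq_abs' V).symm
  have h0 : 0 ≤ Complex.abs V := Complex.abs.nonneg V
  rw [_root_.abs_of_nonneg (by nlinarith)]
  nlinarith

lemma arith1 {c x y : ℝ} (hx0 : 0 ≤ x) (hx : x ≤ 1 - c / 2) (hy0 : 0 ≤ y) (hy : y ≤ 1) :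
    c / 2 ≤ 1 - x * y := by nlinarith

lemma arith2 {c d1 d2 : ℝ} (hc : 0 < c) (h1 : c / 2 ≤ d1) (h2 : c / 2 ≤ d2) :
    c / 2 * (c / 2) ≤ d1 * d2 := by nlinarith

lemma arith_mul_le {v n : ℝ} (hv0 : 0 ≤ v) (hv : v ≤ 1) (hn : 0 ≤ n) : v * n ≤ n := by
  nlinarith

lemma arith_K12 {K t : ℝ} (hK : 0 < K) (ht0 : 0 ≤ t) (ht1 : t < 1) :
    K ≤ 3 * K / (1 - t) := by
  rw [le_div_iff₀ (by linarith)]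
  nlinarith

lemma arith_h5 {x t d e : ℝ} (hx : x ≤ t * d) (hd : d ≤ 2 * e + x) (ht0 : 0 ≤ t)
    (ht1 : t < 1) (he : 0 ≤ e) : x * (1 - t) ≤ 2 * t * e := by
  nlinarith [mul_le_mul_of_nonneg_left hd ht0]

lemma arith_h7 {x t e K δ : ℝ} (h5 : x * (1 - t) ≤ 2 * t * e) (h6 : e ≤ K * δ)
    (ht0 : 0 ≤ t) (ht1 : t < 1) (hK : 0 < K) (hδ : 0 ≤ δ) (he : 0 ≤ e) :
    x ≤ 2 * K * δ / (1 - t) := by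
  rw [le_div_iff₀ (by linarith)]
  nlinarith

lemma arith_h8 {K δ t : ℝ} (hK : 0 < K) (hδ : 0 ≤ δ) (ht0 : 0 ≤ t) (ht1 : t < 1) :
    2 * K * δ / (1 - t) + K * δ ≤ 3 * K / (1 - t) * δ := by
  have hne : (1:ℝ) - t ≠ 0 := by linarith
  have e : 3 * K / (1 - t) * δ = 2 * K * δ / (1 - t) + K * δ / (1 - t) := by
    field_simp
    ring
  have h1 : K * δ ≤ K * δ / (1 - t) := by
    rw [le_div_iff₀ (by linarith)]
    nlinarith [mul_nonneg hK.le hδ]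
  linarith

lemma arith_two_mul_le {p δ : ℝ} (h1 : p ≤ δ) (h2 : 0 ≤ p) : 2 * p ≤ 2 * δ := by linarith

/-! ### The key two-point stability lemma -/

set_option maxHeartbeats 2000000 in
lemma key_two_point {a b : ℂ} (ha : a ∈ unitDisc) (hb : b ∈ unitDisc) (hab : a ≠ b)
    {r : ℝ} (hr0 : 0 ≤ r) (hr1 : r < 1) :
    ∃ C : ℝ, 1 ≤ C ∧ ∀ h : ℂ → ℂ, DifferentiableOn ℂ h unitDisc →
      MapsTo h unitDisc unitDisc → ∀ δ : ℝ, 0 ≤ δ →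
      pd (h a) a ≤ δ → pd (h b) b ≤ δ →
      ∀ z ∈ unitDisc, pd z a ≤ r → pd (h z) z ≤ C * δ := by
  have hA : Complex.abs a < 1 := ha
  have hB : Complex.abs b < 1 := hb
  set β := pd a b with hβdef
  have hβ0 : 0 < β := by
    unfold β
    unfold pd
    rw [map_div₀]
    apply div_pos
    · rw [Complex.abs.pos_iff, sub_ne_zero]; exact hab
    · exact denom_pos hA hB
  have hβ1 : β < 1 := pd_lt_one' ha hb
  set c1 := 1 - Complex.abs a with hc1def
  have hc1 : 0 < c1 := by unfold c1; linarith
  have hc1le1 : c1 ≤ 1 := by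
    unfold c1; linarith [Complex.abs.nonneg a]
  set δ₀ := min ((1 - r) / 4) (c1 / 4) with hδ₀def
  have hδ₀pos : 0 < δ₀ := lt_min (by linarith) (by linarith)
  have hδ₀le : δ₀ ≤ (1 - r) / 4 := min_le_left _ _
  have hδ₀le' : δ₀ ≤ c1 / 4 := min_le_right _ _
  have hδ₀lt1 : δ₀ < 1 := by linarith
  set t := mobAdd r β with htdef
  have ht0 : 0 ≤ t := mobAdd_nonneg hr0 hβ0.le
  have ht1 : t < 1 := mobAdd_lt_one hr0 hr1 hβ0.le hβ1
  set r₁ := mobAdd r δ₀ with hr₁def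
  have hr₁0 : 0 ≤ r₁ := mobAdd_nonneg hr0 hδ₀pos.le
  have hr₁1 : r₁ < 1 := mobAdd_lt_one hr0 hr1 hδ₀pos.le hδ₀lt1
  have hβc1 : 0 < β * c1 ^ 2 := mul_pos hβ0 (pow_pos hc1 2)
  set K₁ := 40 / (β * c1 ^ 2) with hK₁def
  have hK₁0 : 0 < K₁ := div_pos (by norm_num) hβc1
  set K₂ := 3 * K₁ / (1 - t) with hK₂def
  have hK₂0 : 0 < K₂ := div_pos (by linarith) (by linarith)
  have hK₁K₂ : K₁ ≤ K₂ := arith_K12 hK₁0 ht0 ht1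
  set K₃ := (K₂ + 32 / c1 ^ 2) / (1 - r₁) with hK₃def
  have h16 : (0:ℝ) < 32 / c1 ^ 2 := div_pos (by norm_num) (pow_pos hc1 2)
  have hK₃0 : 0 < K₃ := div_pos (by linarith) (by linarith)
  refine ⟨max (max K₃ (1 / δ₀)) 1, le_max_right _ _, ?_⟩
  intro h hd hm δ hδ0 hδa hδb z hz hzr
  set C := max (max K₃ (1 / δ₀)) 1 with hCdef
  have hC0 : 0 < C := lt_of_lt_of_le one_pos (le_max_right _ _)
  by_cases hδsmall : δ ≤ δ₀
  swap
  · -- large δ : trivial bound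
    push_neg at hδsmall
    have h1 : pd (h z) z ≤ 1 := (pd_lt_one' (hm hz) hz).le
    have h2 : 1 ≤ (1 / δ₀) * δ := by
      rw [div_mul_eq_mul_div, le_div_iff₀ hδ₀pos]
      linarith
    have h3 : (1 / δ₀) * δ ≤ C * δ := by
      apply mul_le_mul_of_nonneg_right _ hδ0
      exact le_trans (le_max_right K₃ (1 / δ₀)) (le_max_left _ _)
    linarith
  -- main case
  have hham : h a ∈ unitDisc := hm ha
  have hhbm : h b ∈ unitDisc := hm hb
  have hhzm : h z ∈ unitDisc := hm hz
  have hnega : -a ∈ unitDisc := by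
    have : Complex.abs a < 1 := ha
    simpa [mem_unitDisc] using this
  have e1 : Complex.abs (h a - a) ≤ 2 * δ := by
    have h1 := abs_sub_le_two_pd (show Complex.abs (h a) < 1 from hham) hA
    have h2 := arith_two_mul_le hδa (pd_nonneg (h a) a)
    linarith
  have e2 : Complex.abs (h b - b) ≤ 2 * δ := by
    have h1 := abs_sub_le_two_pd (show Complex.abs (h b) < 1 from hhbm) hB
    have h2 := arith_two_mul_le hδb (pd_nonneg (h b) b)
    linarith
  have hha_ub : Complex.abs (h a) ≤ 1 - c1 / 2 := by
    have h1 : Complex.abs (h a) ≤ Complex.abs a + Complex.abs (h a - a) := by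
      have := Complex.abs.add_le a (h a - a)
      simpa [add_sub_cancel] using this
    have h2 : 2 * δ ≤ c1 / 2 := by linarith
    have h3 : Complex.abs a = 1 - c1 := by unfold c1; ring
    linarith
  have ha_ub : Complex.abs a ≤ 1 - c1 / 2 := by
    have h3 : Complex.abs a = 1 - c1 := by unfold c1; ring
    linarith
  -- numerator estimate at b
  have numest : Complex.abs (mobius (h a) (h b) - mobius a b) ≤ 40 * δ / c1 ^ 2 := by
    have n1 : Complex.abs (mobius (h a) (h b) - mobius (h a) b) ≤ 8 * δ / c1 ^ 2 := by
      have hlip := mobius_lip1 hham hhbm hb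
      have g1 : c1 / 2 ≤ 1 - Complex.abs (h a) * Complex.abs (h b) :=
        arith1 (Complex.abs.nonneg _) hha_ub (Complex.abs.nonneg _) (le_of_lt hhbm)
      have g2 : c1 / 2 ≤ 1 - Complex.abs (h a) * Complex.abs b :=
        arith1 (Complex.abs.nonneg _) hha_ub (Complex.abs.nonneg _) (le_of_lt hB)
      have hdeno := arith2 hc1 g1 g2
      calc Complex.abs (mobius (h a) (h b) - mobius (h a) b)
          ≤ Complex.abs (h b - b) / ((1 - Complex.abs (h a) * Complex.abs (h b))
              * (1 - Complex.abs (h a) * Complex.abs b)) := hlip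
        _ ≤ (2 * δ) / (c1 / 2 * (c1 / 2)) := by
            apply div_le_div₀ (by linarith) e2 (by positivity) hdeno
        _ = 8 * δ / c1 ^ 2 := by
            field_simp
            ring
    have n2 : Complex.abs (mobius (h a) b - mobius a b) ≤ 32 * δ / c1 ^ 2 := by
      have hlip := mobius_lip2 hham ha hb
      have g1 : c1 / 2 ≤ 1 - Complex.abs (h a) * Complex.abs b :=
        arith1 (Complex.abs.nonneg _) hha_ub (Complex.abs.nonneg _) (le_of_lt hB)
      have g2 : c1 / 2 ≤ 1 - Complex.abs a * Complex.abs b :=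
        arith1 (Complex.abs.nonneg _) ha_ub (Complex.abs.nonneg _) (le_of_lt hB)
      have hdeno := arith2 hc1 g1 g2
      calc Complex.abs (mobius (h a) b - mobius a b)
          ≤ 4 * Complex.abs (h a - a) / ((1 - Complex.abs (h a) * Complex.abs b)
              * (1 - Complex.abs a * Complex.abs b)) := hlip
        _ ≤ (4 * (2 * δ)) / (c1 / 2 * (c1 / 2)) := by
            apply div_le_div₀ (by linarith) (by linarith) (by positivity) hdeno
        _ = 32 * δ / c1 ^ 2 := by
            field_simp
            ring
    calc Complex.abs (mobius (h a) (h b) - mobius a b)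
        ≤ Complex.abs (mobius (h a) (h b) - mobius (h a) b)
            + Complex.abs (mobius (h a) b - mobius a b) := by
          have := Complex.abs.add_le (mobius (h a) (h b) - mobius (h a) b)
            (mobius (h a) b - mobius a b)
          simpa [sub_add_sub_cancel] using this
      _ ≤ 8 * δ / c1 ^ 2 + 32 * δ / c1 ^ 2 := add_le_add n1 n2
      _ = 40 * δ / c1 ^ 2 := by ring
  -- the auxiliary function H and its dslope Φ₀
  set H : ℂ → ℂ := fun ζ => mobius (h a) (h (mobius (-a) ζ)) with hHdef
  have hH0 : H 0 = 0 := by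
    simp only [hHdef, mobius_neg_zero, mobius_self]
  have hHd : DifferentiableOn ℂ H unitDisc := by
    apply DifferentiableOn.comp (mobius_diffOn hham)
    · exact DifferentiableOn.comp hd (mobius_diffOn hnega) (mobius_mapsTo hnega)
    · exact hm.comp (mobius_mapsTo hnega)
  have hHm : MapsTo H unitDisc unitDisc :=
    (mobius_mapsTo hham).comp (hm.comp (mobius_mapsTo hnega))
  have h0mem : (0:ℂ) ∈ unitDisc := by simp [mem_unitDisc]
  set Φ₀ := dslope H 0 with hΦ₀def
  have hΦ₀bound : ∀ ζ ∈ unitDisc, Complex.abs (Φ₀ ζ) ≤ 1 := by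
    intro ζ hζ
    have hHd' : DifferentiableOn ℂ H (Metric.ball 0 1) := by
      rw [← unitDisc_eq_ball]; exact hHd
    have hHm' : MapsTo H (Metric.ball 0 1) (Metric.ball (H 0) 1) := by
      rw [hH0, ← unitDisc_eq_ball]; exact hHm
    have := Complex.norm_dslope_le_div_of_mapsTo_ball hHd' (hHm'.mono_right Metric.ball_subset_closedBall)
      (by rw [← unitDisc_eq_ball]; exact hζ)
    simpa using this
  have hΦ₀d : DifferentiableOn ℂ Φ₀ unitDisc :=
    (differentiableOn_dslope (isOpen_unitDisc.mem_nhds h0mem)).mpr hHd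
  have hmul : ∀ ζ : ℂ, Φ₀ ζ * ζ = H ζ := by
    intro ζ
    rcases eq_or_ne ζ 0 with rfl | hζ
    · simp [hΦ₀def, hH0]
    · rw [hΦ₀def, dslope_of_ne _ hζ, slope_def_field, hH0]
      field_simp
      ring
  have hHval : ∀ x ∈ unitDisc, H (mobius a x) = mobius (h a) (h x) := by
    intro x hx
    simp only [hHdef]
    rw [mobius_inv ha hx]
  -- estimate |Φ₀ (mobius a b) - 1| ≤ K₁ δ
  have hβabs : Complex.abs (mobius a b) = β := by
    rw [hβdef, pd_comm a b]; rfl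
  have hσab : mobius a b ∈ unitDisc := mobius_mem ha hb
  have hΦb : Complex.abs (Φ₀ (mobius a b) - 1) ≤ K₁ * δ := by
    have hmulb := hmul (mobius a b)
    rw [hHval b hb] at hmulb
    have key : Complex.abs (Φ₀ (mobius a b) - 1) * β
        = Complex.abs (mobius (h a) (h b) - mobius a b) := by
      rw [← hβabs, ← map_mul, sub_mul, one_mul, hmulb]
    have hest : Complex.abs (Φ₀ (mobius a b) - 1) * β ≤ 40 * δ / c1 ^ 2 := key ▸ numest
    rw [hK₁def, div_mul_eq_mul_div, le_div_iff₀ hβc1]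
    calc Complex.abs (Φ₀ (mobius a b) - 1) * (β * c1 ^ 2)
        = Complex.abs (Φ₀ (mobius a b) - 1) * β * c1 ^ 2 := by ring
      _ ≤ (40 * δ / c1 ^ 2) * c1 ^ 2 := by
          apply mul_le_mul_of_nonneg_right hest (by positivity)
      _ = 40 * δ := by field_simp
  -- uniform estimate  |Φ₀ (mobius a x) - 1| ≤ K₂ δ  for pd x a ≤ r
  have hΦz : ∀ x ∈ unitDisc, pd x a ≤ r → Complex.abs (Φ₀ (mobius a x) - 1) ≤ K₂ * δ := by
    intro x hx hxr
    by_cases hcase : ∀ ζ ∈ unitDisc, Complex.abs (Φ₀ ζ) < 1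
    · -- Schwarz-Pick route
      set U := Φ₀ (mobius a x) with hUdef
      set V := Φ₀ (mobius a b) with hVdef
      have hUm : U ∈ unitDisc := hcase _ (mobius_mem ha hx)
      have hVm : V ∈ unitDisc := hcase _ hσab
      have hsp : pd U V ≤ pd x b := by
        have h1 : pd U V ≤ pd (mobius a x) (mobius a b) :=
          schwarz_pick hΦ₀d (fun ζ hζ => hcase ζ hζ) (mobius_mem ha hx) hσab
        rwa [pd_mobius ha hx hb] at h1
      have hxb : pd x b ≤ t := by
        have h1 := pd_triangle_mob hx ha hb
        rw [htdef]
        exact le_trans h1 (mobAdd_mono (pd_nonneg _ _) (pd_nonneg _ _) hxr le_rfl hr1 hβ1)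
      have hUV : Complex.abs (U - V) ≤ t * Complex.abs (1 - conj' V * U) := by
        have hpd : pd U V ≤ t := le_trans hsp hxb
        unfold pd at hpd
        rw [map_div₀, div_le_iff₀ (denom_pos (show Complex.abs U < 1 from hUm)
          (show Complex.abs V < 1 from hVm))] at hpd
        linarith
      have hdecomp : Complex.abs (1 - conj' V * U)
          ≤ 2 * Complex.abs (1 - V) + Complex.abs (U - V) := by
        have e : (1:ℂ) - conj' V * U = (1 - conj' V * V) + conj' V * (V - U) := by ring
        rw [e]
        have h1 := Complex.abs.add_le (1 - conj' V * V) (conj' V * (V - U))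
        have h2 : Complex.abs (1 - conj' V * V) ≤ 2 * (1 - Complex.abs V) :=
          abs_one_sub_conj_self_le hVm
        have h3 : 1 - Complex.abs V ≤ Complex.abs (1 - V) := one_sub_abs_le_abs_one_sub V
        have h4 : Complex.abs (conj' V * (V - U)) ≤ Complex.abs (U - V) := by
          rw [map_mul, Complex.abs_conj, Complex.abs.map_sub V U]
          exact arith_mul_le (Complex.abs.nonneg V) (le_of_lt hVm) (Complex.abs.nonneg _)
        linarith
      have h6 : Complex.abs (1 - V) ≤ K₁ * δ := by
        rw [← Complex.abs.map_sub V 1]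
        exact hΦb
      have h5 : Complex.abs (U - V) * (1 - t) ≤ 2 * t * Complex.abs (1 - V) :=
        arith_h5 hUV hdecomp ht0 ht1 (Complex.abs.nonneg _)
      have hUVest : Complex.abs (U - V) ≤ 2 * K₁ * δ / (1 - t) :=
        arith_h7 h5 h6 ht0 ht1 hK₁0 hδ0 (Complex.abs.nonneg _)
      calc Complex.abs (U - 1)
          ≤ Complex.abs (U - V) + Complex.abs (V - 1) := by
            have := Complex.abs.add_le (U - V) (V - 1)
            simpa [sub_add_sub_cancel] using this
        _ ≤ 2 * K₁ * δ / (1 - t) + K₁ * δ := add_le_add hUVest hΦb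
        _ ≤ K₂ * δ := by
            rw [hK₂def]
            exact arith_h8 hK₁0 hδ0 ht0 ht1
    · -- constant case via maximum modulus
      push_neg at hcase
      obtain ⟨ζ₀, hζ₀m, hζ₀⟩ := hcase
      have habs1 : Complex.abs (Φ₀ ζ₀) = 1 := le_antisymm (hΦ₀bound ζ₀ hζ₀m) hζ₀
      have hmax : IsMaxOn (norm ∘ Φ₀) unitDisc ζ₀ := by
        intro ζ hζ
        simp only [Function.comp_apply, Complex.norm_eq_abs', Set.mem_setOf_eq]
        rw [habs1]
        exact hΦ₀bound ζ hζ
      have hconst : EqOn Φ₀ (Function.const ℂ (Φ₀ ζ₀)) unitDisc := by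
        apply Complex.eqOn_of_isPreconnected_of_isMaxOn_norm _ isOpen_unitDisc hΦ₀d hζ₀m hmax
        rw [unitDisc_eq_ball]
        exact (convex_ball (0:ℂ) 1).isPreconnected
      have hx' : Φ₀ (mobius a x) = Φ₀ (mobius a b) := by
        rw [hconst (mobius_mem ha hx), hconst hσab]
        rfl
      rw [hx']
      calc Complex.abs (Φ₀ (mobius a b) - 1) ≤ K₁ * δ := hΦb
        _ ≤ K₂ * δ := mul_le_mul_of_nonneg_right hK₁K₂ hδ0
  -- final unwinding at z
  have step0 : pd (h z) z = pd (mobius (h a) (h z)) (mobius (h a) z) :=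
    (pd_mobius hham hhzm hz).symm
  have step1 : mobius (h a) (h z) = Φ₀ (mobius a z) * mobius a z := by
    rw [hmul (mobius a z), hHval z hz]
  have hXm : mobius (h a) (h z) ∈ unitDisc := mobius_mem hham hhzm
  have hV'm : mobius (h a) z ∈ unitDisc := mobius_mem hham hz
  have hV'bound : Complex.abs (mobius (h a) z) ≤ r₁ := by
    have h1 : Complex.abs (mobius (h a) z) = pd z (h a) := rfl
    have h2 : pd z (h a) ≤ mobAdd (pd z a) (pd a (h a)) := pd_triangle_mob hz ha hham
    have h3 : pd a (h a) ≤ δ₀ := by rw [pd_comm]; linarith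
    rw [h1, hr₁def]
    exact le_trans h2 (mobAdd_mono (pd_nonneg _ _) (pd_nonneg _ _) hzr h3 hr1 hδ₀lt1)
  have hXV' : Complex.abs (mobius (h a) (h z) - mobius (h a) z)
      ≤ K₂ * δ + 32 * δ / c1 ^ 2 := by
    have hsz : Complex.abs (mobius a z) ≤ 1 := le_of_lt (mobius_mem ha hz)
    have p1 : Complex.abs (mobius (h a) (h z) - mobius a z) ≤ K₂ * δ := by
      rw [step1]
      have e : Φ₀ (mobius a z) * mobius a z - mobius a z
          = (Φ₀ (mobius a z) - 1) * mobius a z := by ring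
      rw [e, map_mul]
      calc Complex.abs (Φ₀ (mobius a z) - 1) * Complex.abs (mobius a z)
          ≤ (K₂ * δ) * 1 :=
            mul_le_mul (hΦz z hz hzr) hsz (Complex.abs.nonneg _)
              (mul_nonneg hK₂0.le hδ0)
        _ = K₂ * δ := mul_one _
    have p2 : Complex.abs (mobius a z - mobius (h a) z) ≤ 32 * δ / c1 ^ 2 := by
      have hlip := mobius_lip2 ha hham hz
      have g1 : c1 / 2 ≤ 1 - Complex.abs a * Complex.abs z :=
        arith1 (Complex.abs.nonneg _) ha_ub (Complex.abs.nonneg _) (le_of_lt hz)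
      have g2 : c1 / 2 ≤ 1 - Complex.abs (h a) * Complex.abs z :=
        arith1 (Complex.abs.nonneg _) hha_ub (Complex.abs.nonneg _) (le_of_lt hz)
      have hdeno := arith2 hc1 g1 g2
      have haha : Complex.abs (a - h a) ≤ 2 * δ := by
        rw [Complex.abs.map_sub a (h a)]; exact e1
      calc Complex.abs (mobius a z - mobius (h a) z)
          ≤ 4 * Complex.abs (a - h a) / ((1 - Complex.abs a * Complex.abs z)
              * (1 - Complex.abs (h a) * Complex.abs z)) := hlip
        _ ≤ (4 * (2 * δ)) / (c1 / 2 * (c1 / 2)) := by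
            apply div_le_div₀ (by linarith) (by linarith) (by positivity) hdeno
        _ = 32 * δ / c1 ^ 2 := by
            field_simp
            ring
    calc Complex.abs (mobius (h a) (h z) - mobius (h a) z)
        ≤ Complex.abs (mobius (h a) (h z) - mobius a z)
            + Complex.abs (mobius a z - mobius (h a) z) := by
          have := Complex.abs.add_le (mobius (h a) (h z) - mobius a z)
            (mobius a z - mobius (h a) z)
          simpa [sub_add_sub_cancel] using this
      _ ≤ K₂ * δ + 32 * δ / c1 ^ 2 := add_le_add p1 p2
  have final : pd (mobius (h a) (h z)) (mobius (h a) z) ≤ K₃ * δ := by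
    have h1 : pd (mobius (h a) (h z)) (mobius (h a) z)
        ≤ Complex.abs (mobius (h a) (h z) - mobius (h a) z)
          / (1 - Complex.abs (mobius (h a) z)) :=
      pd_le_abs_sub_div (le_of_lt hXm) hV'm
    have h2 : 1 - r₁ ≤ 1 - Complex.abs (mobius (h a) z) := by linarith
    have hnum0 : (0:ℝ) ≤ K₂ * δ + 32 * δ / c1 ^ 2 := by
      have q1 : (0:ℝ) ≤ K₂ * δ := mul_nonneg hK₂0.le hδ0
      have q2 : (0:ℝ) ≤ 32 * δ / c1 ^ 2 := by positivity
      linarith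
    have h3 : Complex.abs (mobius (h a) (h z) - mobius (h a) z)
          / (1 - Complex.abs (mobius (h a) z))
        ≤ (K₂ * δ + 32 * δ / c1 ^ 2) / (1 - r₁) :=
      div_le_div₀ hnum0 hXV' (by linarith) h2
    have h4 : (K₂ * δ + 32 * δ / c1 ^ 2) / (1 - r₁) = K₃ * δ := by
      rw [hK₃def]
      field_simp
    calc pd (mobius (h a) (h z)) (mobius (h a) z)
        ≤ Complex.abs (mobius (h a) (h z) - mobius (h a) z)
            / (1 - Complex.abs (mobius (h a) z)) := h1
      _ ≤ (K₂ * δ + 32 * δ / c1 ^ 2) / (1 - r₁) := h3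
      _ = K₃ * δ := h4
  rw [step0]
  calc pd (mobius (h a) (h z)) (mobius (h a) z) ≤ K₃ * δ := final
    _ ≤ C * δ := by
        apply mul_le_mul_of_nonneg_right _ hδ0
        exact le_trans (le_max_left K₃ (1 / δ₀)) (le_max_left _ _)


/-! ### leftComp basics -/

lemma leftComp_mapsTo {g : ℕ → ℂ → ℂ} (hm : ∀ n, MapsTo (g n) unitDisc unitDisc) :
    ∀ n, MapsTo (leftComp g n) unitDisc unitDisc := by
  intro n
  induction n with
  | zero => exact fun z hz => hz
  | succ n ih => exact (hm n).comp ih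

lemma leftComp_diffOn {g : ℕ → ℂ → ℂ} (hd : ∀ n, DifferentiableOn ℂ (g n) unitDisc)
    (hm : ∀ n, MapsTo (g n) unitDisc unitDisc) :
    ∀ n, DifferentiableOn ℂ (leftComp g n) unitDisc := by
  intro n
  induction n with
  | zero => exact differentiableOn_id
  | succ n ih => exact (hd n).comp ih (leftComp_mapsTo hm n)

/-! ### limits and pd -/

lemma denom_ne_zero' {z w : ℂ} (hz : Complex.abs z ≤ 1) (hw : Complex.abs w < 1) :
    (1 : ℂ) - conj' w * z ≠ 0 := by
  intro h
  have h1 : Complex.abs (conj' w * z) = 1 := by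
    have : (1:ℂ) = conj' w * z := by linear_combination h
    rw [← this]; simp
  rw [map_mul, Complex.abs_conj] at h1
  nlinarith [Complex.abs.nonneg w, Complex.abs.nonneg z]

lemma tendsto_pd_of_tendsto {u : ℕ → ℂ} {L y : ℂ} (hu : Tendsto u atTop (𝓝 L))
    (hy : Complex.abs y < 1) (hL : Complex.abs L ≤ 1) :
    Tendsto (fun n => pd (u n) y) atTop (𝓝 (pd L y)) := by
  have hden : (1 : ℂ) - conj' y * L ≠ 0 := denom_ne_zero' hL hy
  have h1 : Tendsto (fun n => u n - y) atTop (𝓝 (L - y)) := hu.sub_const y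
  have h2 : Tendsto (fun n => (1:ℂ) - conj' y * u n) atTop (𝓝 (1 - conj' y * L)) :=
    tendsto_const_nhds.sub (tendsto_const_nhds.mul hu)
  have h3 : Tendsto (fun n => (u n - y) / (1 - conj' y * u n)) atTop
      (𝓝 ((L - y) / (1 - conj' y * L))) := h1.div h2 hden
  exact (continuous_norm.continuousAt.tendsto).comp h3

/-! ### nonconstancy under composition -/

lemma unitDisc_preconnected : IsPreconnected unitDisc := by
  rw [unitDisc_eq_ball]
  exact (convex_ball (0:ℂ) 1).isPreconnected

/-- if a holomorphic map agrees with a constant frequently near an interior point,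
it is that constant everywhere -/
lemma eq_const_of_frequently {g : ℂ → ℂ} (hg : DifferentiableOn ℂ g unitDisc) {w₀ : ℂ}
    (hw₀ : w₀ ∈ unitDisc) {c : ℂ} (hfreq : ∃ᶠ x in 𝓝[≠] w₀, g x = c) :
    ∀ x ∈ unitDisc, g x = c := by
  have hana : AnalyticOnNhd ℂ g unitDisc := hg.analyticOnNhd isOpen_unitDisc
  have hconst : AnalyticOnNhd ℂ (fun _ : ℂ => c) unitDisc := analyticOnNhd_const
  have := hana.eqOn_of_preconnected_of_frequently_eq hconst unitDisc_preconnected hw₀ hfreq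
  exact fun x hx => this hx

/-- a non-constant holomorphic self-map is not locally constant -/
lemma exists_ne_near {h : ℂ → ℂ} (hd : DifferentiableOn ℂ h unitDisc)
    {u₁ : ℂ} (hu₁ : u₁ ∈ unitDisc)
    (hh : ∃ u ∈ unitDisc, ∃ v ∈ unitDisc, h u ≠ h v) :
    ∀ W ∈ 𝓝[unitDisc] u₁, ∃ u ∈ W ∩ unitDisc, h u ≠ h u₁ := by
  intro W hW
  by_contra hcon
  push_neg at hcon
  -- h is constant on W ∩ unitDisc, a neighborhood of u₁ within the disc
  have hfreq : ∃ᶠ x in 𝓝[≠] u₁, h x = h u₁ := by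
    have hWD : W ∩ unitDisc ∈ 𝓝 u₁ := by
      have h1 : W ∩ unitDisc ∈ 𝓝[unitDisc] u₁ :=
        Filter.inter_mem hW self_mem_nhdsWithin
      rwa [nhdsWithin_eq_nhds.mpr (isOpen_unitDisc.mem_nhds hu₁)] at h1
    apply Filter.Eventually.frequently
    filter_upwards [nhdsWithin_le_nhds hWD] with x hx
    exact hcon x hx
  obtain ⟨u, hu, v, hv, hne⟩ := hh
  have := eq_const_of_frequently hd hu₁ hfreq
  exact hne ((this u hu).trans (this v hv).symm)

lemma comp_nonconstant {g h : ℂ → ℂ} (hgd : DifferentiableOn ℂ g unitDisc)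
    (hhd : DifferentiableOn ℂ h unitDisc) (hhm : MapsTo h unitDisc unitDisc)
    (hg : ∃ u ∈ unitDisc, ∃ v ∈ unitDisc, g u ≠ g v)
    (hh : ∃ u ∈ unitDisc, ∃ v ∈ unitDisc, h u ≠ h v) :
    ∃ u ∈ unitDisc, ∃ v ∈ unitDisc, g (h u) ≠ g (h v) := by
  by_contra hcon
  push_neg at hcon
  obtain ⟨u₁, hu₁, v₁, hv₁, hne₁⟩ := hh
  -- g = g (h u₁) frequently near h u₁
  have hfreq : ∃ᶠ x in 𝓝[≠] (h u₁), g x = g (h u₁) := by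
    rw [Filter.frequently_iff]
    intro U hU
    obtain ⟨V, hVopen, hVmem, hVU⟩ := mem_nhdsWithin.mp hU
    have hcont : ContinuousWithinAt h unitDisc u₁ := (hhd.continuousOn) u₁ hu₁
    have hpre : h ⁻¹' V ∈ 𝓝[unitDisc] u₁ := hcont (hVopen.mem_nhds hVmem)
    obtain ⟨u, hu, hune⟩ := exists_ne_near hhd hu₁ ⟨u₁, hu₁, v₁, hv₁, hne₁⟩ _ hpre
    refine ⟨h u, hVU ⟨hu.1, hune⟩, ?_⟩
    exact hcon u hu.2 u₁ hu₁
  have hgc := eq_const_of_frequently hgd (hhm hu₁) hfreq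
  obtain ⟨p, hp, q, hq, hpq⟩ := hg
  exact hpq ((hgc p hp).trans (hgc q hq).symm)


/-! ### nat arithmetic for inverse iterates -/

lemma nat_add_im (m n : ℕ) (hm : 0 < m) : (n + (m - n % m) % m) % m = 0 := by
  have h1 : n % m < m := Nat.mod_lt _ hm
  rcases Nat.eq_zero_or_pos (n % m) with h0 | hpos
  · have h2 : (m - n % m) % m = 0 := by rw [h0, Nat.sub_zero, Nat.mod_self]
    rw [h2, Nat.add_zero]; exact h0
  · have h2 : (m - n % m) % m = m - n % m := Nat.mod_eq_of_lt (by omega)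
    rw [h2]
    have h3 : n + (m - n % m) = (n - n % m) + m := by
      have := Nat.mod_le n m
      omega
    rw [h3, Nat.add_mod_right]
    have h4 : n - n % m = m * (n / m) := by
      have := Nat.div_add_mod n m
      omega
    rw [h4, Nat.mul_mod_right]

lemma nat_succ_add_im (m n : ℕ) (hm : 2 ≤ m) : (n + 1 + (m - n % m) % m) % m = 1 := by
  have h0 := nat_add_im m n (by omega)
  have h2 : 1 % m = 1 := Nat.mod_eq_of_lt (by omega)
  have h1 : n + 1 + (m - n % m) % m = (n + (m - n % m) % m) + 1 := by omega
  rw [h1, Nat.add_mod, h0, h2, Nat.zero_add, h2]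

end StabAux

open StabAux in
set_option maxHeartbeats 4000000 in
/-- **Stability at an elliptic transformation of finite order, left compositions.**
Here "f is an elliptic Möbius transformation fixing 𝔻 of finite order m" is encoded as:
f is a conformal automorphism of 𝔻 with a fixed point in 𝔻, f is not the identity on 𝔻,
`f^[m]` is the identity on 𝔻, and m is least with this property. -/
theorem stability_elliptic_finite_order_left
    (f : ℂ → ℂ) (m : ℕ)
    (hf : DifferentiableOn ℂ f unitDisc) (hfmap : MapsTo f unitDisc unitDisc)
    (hfbij : BijOn f unitDisc unitDisc)
    (hfix : ∃ p ∈ unitDisc, f p = p)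
    (hnotid : ∃ z ∈ unitDisc, f z ≠ z)
    (hm : 1 ≤ m) (horder : ∀ z ∈ unitDisc, f^[m] z = z)
    (hleast : ∀ j, 1 ≤ j → j < m → ∃ z ∈ unitDisc, f^[j] z ≠ z)
    (fseq : ℕ → ℂ → ℂ)
    (hholo : ∀ n, DifferentiableOn ℂ (fseq n) unitDisc)
    (hself : ∀ n, MapsTo (fseq n) unitDisc unitDisc)
    (hnonconst : ∀ n, ∃ z ∈ unitDisc, ∃ w ∈ unitDisc, fseq n z ≠ fseq n w)
    (a b : ℂ) (ha : a ∈ unitDisc) (hb : b ∈ unitDisc) (hab : a ≠ b)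
    (hsa : Summable fun n => hdist (fseq n a) (f a))
    (hsb : Summable fun n => hdist (fseq n b) (f b)) :
    ∃ F : ℂ → ℂ, DifferentiableOn ℂ F unitDisc ∧ MapsTo F unitDisc unitDisc ∧
      (∃ z ∈ unitDisc, ∃ w ∈ unitDisc, F z ≠ F w) ∧
      ∀ j < m, TendstoLocallyUniformlyOn (fun n z => leftComp fseq (n * m + j) z)
        (fun z => f^[j] (F z)) atTop unitDisc := by
  classical
  have hm0 : 0 < m := hm
  have hm2 : 2 ≤ m := by
    rcases hnotid with ⟨z0, hz0, hz0ne⟩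
    by_contra hlt
    push_neg at hlt
    have hm1 : m = 1 := by omega
    have h1 := horder z0 hz0
    rw [hm1, Function.iterate_one] at h1
    exact hz0ne h1
  have hDopen := isOpen_unitDisc
  -- iterates of f
  have hfIterM : ∀ k : ℕ, MapsTo (f^[k]) unitDisc unitDisc := fun k => hfmap.iterate k
  have hfIterD : ∀ k : ℕ, DifferentiableOn ℂ (f^[k]) unitDisc := by
    intro k
    induction k with
    | zero => exact differentiableOn_id
    | succ k ih =>
      rw [Function.iterate_succ']
      exact hf.comp ih (hfIterM k)
  have hIterMul : ∀ s : ℕ, ∀ z ∈ unitDisc, f^[m * s] z = z := by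
    intro s
    induction s with
    | zero => intro z _; simp
    | succ s ih =>
      intro z hz
      have h1 : m * (s + 1) = m * s + m := by ring
      rw [h1, Function.iterate_add_apply, horder z hz]
      exact ih z hz
  have hIterMod : ∀ k : ℕ, ∀ z ∈ unitDisc, f^[k] z = f^[k % m] z := by
    intro k z hz
    conv_lhs => rw [← Nat.div_add_mod k m]
    rw [Function.iterate_add_apply]
    exact hIterMul (k / m) _ (hfIterM _ hz)
  have hIterCongr : ∀ p q : ℕ, p % m = q % m → ∀ z, z ∈ unitDisc → f^[p] z = f^[q] z := by
    intro p q hpq z hz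
    rw [hIterMod p z hz, hIterMod q z hz, hpq]
  have hIterIso : ∀ k : ℕ, ∀ u, u ∈ unitDisc → ∀ v, v ∈ unitDisc →
      pd (f^[k] u) (f^[k] v) = pd u v := by
    intro k u hu v hv
    apply le_antisymm (schwarz_pick (hfIterD k) (hfIterM k) hu hv)
    have h1 : pd (f^[k * (m-1)] (f^[k] u)) (f^[k * (m-1)] (f^[k] v))
        ≤ pd (f^[k] u) (f^[k] v) :=
      schwarz_pick (hfIterD _) (hfIterM _) (hfIterM k hu) (hfIterM k hv)
    rw [← Function.iterate_add_apply, ← Function.iterate_add_apply] at h1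
    have h2 : k * (m-1) + k = m * k := by
      have h3 : m - 1 + 1 = m := Nat.succ_pred_eq_of_pos hm0
      calc k * (m-1) + k = k * ((m-1) + 1) := by ring
        _ = k * m := by rw [h3]
        _ = m * k := Nat.mul_comm k m
    rw [h2, hIterMul k u hu, hIterMul k v hv] at h1
    exact h1
  have hfInj : ∀ k : ℕ, Set.InjOn (f^[k]) unitDisc := by
    intro k
    induction k with
    | zero => simpa using Set.injOn_id unitDisc
    | succ k ih =>
      rw [Function.iterate_succ']
      exact hfbij.injOn.comp ih (hfIterM k)
  -- summable error sequence
  set ε : ℕ → ℝ := fun n => pd (fseq n a) (f a) + pd (fseq n b) (f b) with hεdef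
  have hε0 : ∀ n, 0 ≤ ε n := fun n => add_nonneg (pd_nonneg _ _) (pd_nonneg _ _)
  have hεa : ∀ n, pd (fseq n a) (f a) ≤ ε n := fun n =>
    le_add_of_nonneg_right (pd_nonneg _ _)
  have hεb : ∀ n, pd (fseq n b) (f b) ≤ ε n := fun n =>
    le_add_of_nonneg_left (pd_nonneg _ _)
  have hεsum : Summable ε := by
    apply Summable.add
    · exact Summable.of_nonneg_of_le (fun n => pd_nonneg _ _)
        (fun n => pd_le_hdist (hself n ha) (hfmap ha)) hsa
    · exact Summable.of_nonneg_of_le (fun n => pd_nonneg _ _)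
        (fun n => pd_le_hdist (hself n hb) (hfmap hb)) hsb
  -- the comparison maps f^[m-1] ∘ fseq n
  have hmapD : ∀ n, DifferentiableOn ℂ (f^[m-1] ∘ fseq n) unitDisc := fun n =>
    (hfIterD (m-1)).comp (hholo n) (hself n)
  have hmapM : ∀ n, MapsTo (f^[m-1] ∘ fseq n) unitDisc unitDisc := fun n =>
    (hfIterM (m-1)).comp (hself n)
  have hmap_pd : ∀ n, ∀ u ∈ unitDisc, pd ((f^[m-1] ∘ fseq n) u) u
      = pd (fseq n u) (f u) := by
    intro n u hu
    have h1 : f^[m-1] (f u) = u := by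
      have h2 : f^[(m-1) + 1] u = f^[m-1] (f u) := Function.iterate_succ_apply f (m-1) u
      have h3 : (m-1) + 1 = m := Nat.succ_pred_eq_of_pos hm0
      rw [← h2, h3]
      exact horder u hu
    calc pd ((f^[m-1] ∘ fseq n) u) u
        = pd (f^[m-1] (fseq n u)) (f^[m-1] (f u)) := by rw [h1]; rfl
      _ = pd (fseq n u) (f u) := hIterIso (m-1) _ (hself n hu) _ (hfmap hu)
  -- first key constant at radius M₀
  have hrange_ne : (Finset.range m).Nonempty := ⟨0, Finset.mem_range.mpr hm0⟩
  set M₀ : ℝ := (Finset.range m).sup' hrange_ne (fun j => pd (f^[j] a) a) with hM₀def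
  have hM₀lt1 : M₀ < 1 := by
    rw [hM₀def, Finset.sup'_lt_iff]
    intro j _
    exact pd_lt_one' (hfIterM j ha) ha
  have hM₀0 : 0 ≤ M₀ := by
    have h1 : pd (f^[0] a) a ≤ M₀ :=
      Finset.le_sup' (f := fun j => pd (f^[j] a) a) (Finset.mem_range.mpr hm0)
    simpa [pd_self] using h1
  have hM₀j : ∀ k : ℕ, pd (f^[k] a) a ≤ M₀ := by
    intro k
    rw [hIterMod k a ha]
    exact Finset.le_sup' (f := fun j => pd (f^[j] a) a)
      (Finset.mem_range.mpr (Nat.mod_lt _ hm0))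
  obtain ⟨C₀, hC₀1, hkey₀⟩ := key_two_point ha hb hab hM₀0 hM₀lt1
  have hθ : ∀ n k : ℕ, pd (fseq n (f^[k] a)) (f (f^[k] a)) ≤ C₀ * ε n := by
    intro n k
    have hka : f^[k] a ∈ unitDisc := hfIterM k ha
    have h1 := hkey₀ (f^[m-1] ∘ fseq n) (hmapD n) (hmapM n) (ε n) (hε0 n)
      (by rw [hmap_pd n a ha]; exact hεa n)
      (by rw [hmap_pd n b hb]; exact hεb n)
      (f^[k] a) hka (hM₀j k)
    rwa [hmap_pd n _ hka] at h1
  -- hdist errors along the finite orbit of a, summable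
  set θH : ℕ → ℝ := fun j => ∑ i ∈ Finset.range m,
    hdist (fseq j (f^[i] a)) (f (f^[i] a)) with hθHdef
  have hθH0 : ∀ j, 0 ≤ θH j := fun j => Finset.sum_nonneg fun i _ =>
    hdist_nonneg' (hself j (hfIterM i ha)) (hfmap (hfIterM i ha))
  have hθHsum : Summable θH := by
    apply summable_sum
    intro i _
    have htend : Tendsto (fun j => C₀ * ε j) atTop (𝓝 0) := by
      have h1 := hεsum.tendsto_atTop_zero
      have h2 := h1.const_mul C₀
      simpa using h2
    have hev : ∀ᶠ j in atTop, C₀ * ε j < 1/2 := htend.eventually (gt_mem_nhds (by norm_num))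
    obtain ⟨N₀, hN₀⟩ := eventually_atTop.mp hev
    rw [← summable_nat_add_iff N₀]
    have hs : Summable (fun j => ε (j + N₀)) := (summable_nat_add_iff N₀).mpr hεsum
    apply Summable.of_nonneg_of_le
      (fun j => hdist_nonneg' (hself _ (hfIterM i ha)) (hfmap (hfIterM i ha)))
      (fun j => ?_) ((hs.mul_left C₀).mul_left 4)
    apply hdist_le_four_mul (hself _ (hfIterM i ha)) (hfmap (hfIterM i ha))
      (hθ (j + N₀) i)
    exact le_of_lt (hN₀ (j + N₀) (Nat.le_add_left N₀ j))
  set B := ∑' j, θH j with hBdef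
  have hB0 : 0 ≤ B := tsum_nonneg hθH0
  have hpartialB : ∀ s : Finset ℕ, ∑ j ∈ s, θH j ≤ B := fun s =>
    Summable.sum_le_tsum s (fun j _ => hθH0 j) hθHsum
  -- shifted left compositions
  set T : ℕ → ℕ → ℂ → ℂ := fun N n => leftComp (fun k => fseq (N + k)) n with hTdef
  have hTm : ∀ N n, MapsTo (T N n) unitDisc unitDisc := fun N n =>
    leftComp_mapsTo (fun k => hself (N + k)) n
  have hTd : ∀ N n, DifferentiableOn ℂ (T N n) unitDisc := fun N n =>
    leftComp_diffOn (fun k => hholo (N + k)) (fun k => hself (N + k)) n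
  have hTsucc : ∀ N n z, T N (n+1) z = fseq (N + n) (T N n z) := fun N n z => rfl
  have hTdecomp : ∀ N n z, leftComp fseq (N + n) z = T N n (leftComp fseq N z) := by
    intro N n
    induction n with
    | zero => intro z; rfl
    | succ n ih =>
      intro z
      show fseq (N + n) (leftComp fseq (N + n) z) = _
      rw [ih z]
      rfl
  have hT0 : ∀ n z, T 0 n z = leftComp fseq n z := by
    have hfun : (fun k => fseq (0 + k)) = fseq := funext fun k => by rw [Nat.zero_add]
    intro n z
    show leftComp (fun k => fseq (0 + k)) n z = _
    rw [hfun]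
  -- hdist orbit bound
  have horb : ∀ N n : ℕ, hdist (T N n a) (f^[n] a)
      ≤ ∑ k ∈ Finset.range n, θH (N + k) := by
    intro N n
    induction n with
    | zero =>
      have : hdist (T N 0 a) (f^[0] a) = 0 := by
        show hdist a a = 0
        exact hdist_self a
      rw [this, Finset.range_zero, Finset.sum_empty]
    | succ n ih =>
      have hTna : T N n a ∈ unitDisc := hTm N n ha
      have hfna : f^[n] a ∈ unitDisc := hfIterM n ha
      have step : hdist (T N (n+1) a) (f^[n+1] a)
          ≤ hdist (T N n a) (f^[n] a)
            + hdist (fseq (N+n) (f^[n] a)) (f (f^[n] a)) := by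
        rw [hTsucc, Function.iterate_succ_apply']
        calc hdist (fseq (N+n) (T N n a)) (f (f^[n] a))
            ≤ hdist (fseq (N+n) (T N n a)) (fseq (N+n) (f^[n] a))
              + hdist (fseq (N+n) (f^[n] a)) (f (f^[n] a)) :=
              hdist_triangle' (hself _ hTna) (hself _ hfna) (hfmap hfna)
          _ ≤ _ := by
              have h1 := hdist_schwarz_pick (hholo (N+n)) (hself (N+n)) hTna hfna
              linarith
      have hsingle : hdist (fseq (N+n) (f^[n] a)) (f (f^[n] a)) ≤ θH (N + n) := by
        rw [hIterMod n a ha]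
        exact Finset.single_le_sum
          (f := fun i => hdist (fseq (N+n) (f^[i] a)) (f (f^[i] a)))
          (fun i _ => hdist_nonneg' (hself _ (hfIterM i ha)) (hfmap (hfIterM i ha)))
          (Finset.mem_range.mpr (Nat.mod_lt _ hm0))
      rw [Finset.sum_range_succ]
      linarith
  have horbB : ∀ N n, hdist (T N n a) (f^[n] a) ≤ B := by
    intro N n
    refine le_trans (horb N n) ?_
    have h1 : ∑ k ∈ Finset.range n, θH (N + k)
        = ∑ j ∈ (Finset.range n).image (fun k => N + k), θH j :=
      (Finset.sum_image (fun x _ y _ hxy => Nat.add_left_cancel hxy)).symm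
    rw [h1]
    exact hpartialB _
  -- pd orbit bounds
  set Q : ℝ := (Real.exp B - 1) / (Real.exp B + 1) with hQdef
  have hQ0 : 0 ≤ Q := by
    apply div_nonneg _ (by positivity)
    have := Real.one_le_exp hB0
    linarith
  have hQ1 : Q < 1 := by
    rw [hQdef, div_lt_one (by positivity)]
    linarith [Real.exp_pos B]
  have horbQ : ∀ N n, pd (T N n a) (f^[n] a) ≤ Q := fun N n =>
    pd_le_of_hdist_le (hTm N n ha) (hfIterM n ha) (horbB N n)
  set Q₁ : ℝ := mobAdd Q M₀ with hQ₁def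
  have hQ₁0 : 0 ≤ Q₁ := mobAdd_nonneg hQ0 hM₀0
  have hQ₁1 : Q₁ < 1 := mobAdd_lt_one hQ0 hQ1 hM₀0 hM₀lt1
  have horbA : ∀ N n, pd (T N n a) a ≤ Q₁ := by
    intro N n
    refine le_trans (pd_triangle_mob (hTm N n ha) (hfIterM n ha) ha) ?_
    exact mobAdd_mono (pd_nonneg _ _) (pd_nonneg _ _) (horbQ N n) (hM₀j n) hQ1 hM₀lt1
  have horbZ : ∀ N n, ∀ z ∈ unitDisc, pd (T N n z) a ≤ mobAdd (pd z a) Q₁ := by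
    intro N n z hz
    refine le_trans (pd_triangle_mob (hTm N n hz) (hTm N n ha) ha) ?_
    exact mobAdd_mono (pd_nonneg _ _) (pd_nonneg _ _)
      (schwarz_pick (hTd N n) (hTm N n) hz ha) (horbA N n)
      (pd_lt_one' hz ha) hQ₁1
  -- renormalized compositions G
  set imv : ℕ → ℕ := fun n => (m - n % m) % m with himdef
  have himlt : ∀ n, imv n < m := fun n => Nat.mod_lt _ hm0
  have him0 : imv 0 = 0 := by
    show (m - 0 % m) % m = 0
    simp
  set G : ℕ → ℕ → ℂ → ℂ := fun N n z => f^[imv n] (T N n z) with hGdef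
  have hGm : ∀ N n, MapsTo (G N n) unitDisc unitDisc := fun N n =>
    (hfIterM (imv n)).comp (hTm N n)
  have hGd : ∀ N n, DifferentiableOn ℂ (G N n) unitDisc := fun N n =>
    (hfIterD (imv n)).comp (hTd N n) (hTm N n)
  have hG0 : ∀ N z, G N 0 z = z := by
    intro N z
    show f^[imv 0] (T N 0 z) = z
    rw [him0]
    rfl
  have hEid : ∀ (n : ℕ) (X : ℂ), X ∈ unitDisc → f^[n % m] (f^[imv n] X) = X := by
    intro n X hX
    rw [← Function.iterate_add_apply]
    have harith : (n % m + imv n) % m = 0 % m := by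
      have h1 := StabAux.nat_add_im m n hm0
      have h2 : (imv n) % m = imv n := Nat.mod_eq_of_lt (himlt n)
      have h3 : (n + imv n) % m = ((n % m) + (imv n) % m) % m := Nat.add_mod n (imv n) m
      rw [h2] at h3
      rw [← h3, h1, Nat.zero_mod]
    rw [hIterCongr _ 0 harith X hX]
    rfl
  have hGrecover : ∀ n, ∀ z ∈ unitDisc, leftComp fseq n z = f^[n % m] (G 0 n z) := by
    intro n z hz
    have hF : leftComp fseq n z ∈ unitDisc := leftComp_mapsTo hself n hz
    show _ = f^[n % m] (f^[imv n] (T 0 n z))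
    rw [hT0 n z, hEid n _ hF]
  have hGstep : ∀ N n, ∀ z ∈ unitDisc,
      pd (G N (n+1) z) (G N n z) = pd (fseq (N + n) (T N n z)) (f (T N n z)) := by
    intro N n z hz
    have hw : T N n z ∈ unitDisc := hTm N n hz
    have hu : fseq (N + n) (T N n z) ∈ unitDisc := hself _ hw
    have hmem1 : G N (n+1) z ∈ unitDisc := hGm N (n+1) hz
    have hmem2 : G N n z ∈ unitDisc := hGm N n hz
    have hiso := hIterIso (n+1) _ hmem1 _ hmem2
    have e1 : f^[n+1] (G N (n+1) z) = fseq (N+n) (T N n z) := by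
      show f^[n+1] (f^[imv (n+1)] (T N (n+1) z)) = _
      rw [hTsucc, ← Function.iterate_add_apply]
      have harith : ((n+1) + imv (n+1)) % m = 0 % m := by
        rw [Nat.zero_mod]
        exact StabAux.nat_add_im m (n+1) hm0
      rw [hIterCongr _ 0 harith _ hu]
      rfl
    have e2 : f^[n+1] (G N n z) = f (T N n z) := by
      show f^[n+1] (f^[imv n] (T N n z)) = _
      rw [← Function.iterate_add_apply]
      have harith : ((n+1) + imv n) % m = 1 % m := by
        rw [Nat.mod_eq_of_lt (by omega : 1 < m)]
        exact StabAux.nat_succ_add_im m n hm2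
      rw [hIterCongr _ 1 harith _ hw]
      rfl
    rw [e1, e2] at hiso
    exact hiso.symm
  -- uniform Cauchy estimates
  have hcauchy : ∀ ra : ℝ, 0 ≤ ra → ra < 1 →
      ∃ CK : ℝ, 1 ≤ CK ∧ ∀ N n n' : ℕ, n ≤ n' → ∀ z ∈ unitDisc, pd z a ≤ ra →
        pd (G N n' z) (G N n z) ≤ CK * ∑ k ∈ Finset.Ico n n', ε (N + k) := by
    intro ra hra0 hra1
    have hrs0 : 0 ≤ mobAdd ra Q₁ := mobAdd_nonneg hra0 hQ₁0
    have hrs1 : mobAdd ra Q₁ < 1 := mobAdd_lt_one hra0 hra1 hQ₁0 hQ₁1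
    obtain ⟨CK, hCK1, hkeyK⟩ := key_two_point ha hb hab hrs0 hrs1
    refine ⟨CK, hCK1, ?_⟩
    intro N n n' hnn' z hz hzra
    have hstep : ∀ p : ℕ, pd (G N (p+1) z) (G N p z) ≤ CK * ε (N + p) := by
      intro p
      rw [hGstep N p z hz]
      have hw : T N p z ∈ unitDisc := hTm N p hz
      rw [← hmap_pd (N+p) _ hw]
      apply hkeyK (f^[m-1] ∘ fseq (N+p)) (hmapD _) (hmapM _) (ε (N+p)) (hε0 _)
        (by rw [hmap_pd _ a ha]; exact hεa _)
        (by rw [hmap_pd _ b hb]; exact hεb _)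
        _ hw
      refine le_trans (horbZ N p z hz) ?_
      exact mobAdd_mono (pd_nonneg _ _) hQ₁0 hzra le_rfl hra1 hQ₁1
    obtain ⟨d, rfl⟩ := Nat.exists_eq_add_of_le hnn'
    clear hnn'
    induction d with
    | zero => simp [pd_self, Finset.Ico_self]
    | succ d ih =>
      have h1 : pd (G N (n + (d+1)) z) (G N n z)
          ≤ pd (G N (n+d+1) z) (G N (n+d) z) + pd (G N (n+d) z) (G N n z) :=
        pd_triangle (hGm N (n+d+1) hz) (hGm N (n+d) hz) (hGm N n hz)
      have h2 := hstep (n + d)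
      have h3 : ∑ k ∈ Finset.Ico n (n + (d+1)), ε (N+k)
          = ∑ k ∈ Finset.Ico n (n+d), ε (N+k) + ε (N + (n+d)) := by
        rw [show n + (d+1) = (n+d) + 1 from rfl,
          Finset.sum_Ico_succ_top (Nat.le_add_right n d)]
      rw [h3]
      have h4 : CK * (∑ k ∈ Finset.Ico n (n+d), ε (N+k) + ε (N + (n+d)))
          = CK * ∑ k ∈ Finset.Ico n (n+d), ε (N+k) + CK * ε (N + (n+d)) := by ring
      have h5 : CK * (∑ k ∈ Finset.Ico n (n+d), ε (N+k))
          + CK * ε (N + (n+d)) = CK * (∑ k ∈ Finset.Ico n (n+d), ε (N+k) + ε (N + (n+d))) := by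
        ring
      linarith [ih, h1, h2, h5]
  -- tail sums
  set Tail : ℕ → ℝ := fun j => ∑' k, ε (k + j) with hTaildef
  have hTailsummable : ∀ j, Summable (fun k => ε (k + j)) := fun j =>
    (summable_nat_add_iff j).mpr hεsum
  have hTailbound : ∀ j n n' : ℕ, ∑ k ∈ Finset.Ico n n', ε (j + k) ≤ Tail (j + n) := by
    intro j n n'
    rw [Finset.sum_Ico_eq_sum_range]
    calc ∑ i ∈ Finset.range (n' - n), ε (j + (n + i))
        = ∑ i ∈ Finset.range (n' - n), ε (i + (j + n)) :=
          Finset.sum_congr rfl (fun i _ => by rw [show j + (n+i) = i + (j+n) from by omega])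
      _ ≤ ∑' i, ε (i + (j+n)) :=
          Summable.sum_le_tsum _ (fun i _ => hε0 _) (hTailsummable (j+n))
      _ = Tail (j + n) := rfl
  have hTail0 : ∀ j, 0 ≤ Tail j := fun j => tsum_nonneg (fun k => hε0 _)
  have hTailtend : Tendsto Tail atTop (𝓝 0) := tendsto_sum_nat_add ε
  -- pointwise limits
  have hex : ∀ N : ℕ, ∀ z ∈ unitDisc, ∃ L : ℂ, Tendsto (fun n => G N n z) atTop (𝓝 L) := by
    intro N z hz
    obtain ⟨CK, hCK1, hch⟩ := hcauchy (pd z a) (pd_nonneg _ _) (pd_lt_one' hz ha)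
    apply cauchySeq_tendsto_of_complete
    apply cauchySeq_of_summable_dist
    have hsum2 : Summable (fun n => 2 * (CK * ε (N + n))) := by
      have h1 : Summable (fun n => ε (n + N)) := (summable_nat_add_iff N).mpr hεsum
      have h2 : (fun n => 2 * (CK * ε (N + n))) = (fun n => 2 * (CK * ε (n + N))) :=
        funext fun n => by rw [Nat.add_comm N n]
      rw [h2]
      exact (h1.mul_left CK).mul_left 2
    apply Summable.of_nonneg_of_le (fun n => dist_nonneg) (fun n => ?_) hsum2
    have h3 := dist_le_two_pd (show Complex.abs (G N n z) < 1 from hGm N n hz)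
      (show Complex.abs (G N (n+1) z) < 1 from hGm N (n+1) hz)
    have h4 : pd (G N n z) (G N (n+1) z) ≤ CK * ε (N + n) := by
      rw [pd_comm]
      have h5 := hch N n (n+1) (Nat.le_succ n) z hz le_rfl
      rwa [Nat.Ico_succ_singleton, Finset.sum_singleton] at h5
    calc dist (G N n z) (G N (n+1) z) ≤ 2 * pd (G N n z) (G N (n+1) z) := h3
      _ ≤ 2 * (CK * ε (N + n)) := by linarith
  set FL : ℕ → ℂ → ℂ := fun N z =>
    if hz : z ∈ unitDisc then Classical.choose (hex N z hz) else 0 with hFLdef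
  have hFLtend : ∀ N, ∀ z, ∀ hz : z ∈ unitDisc,
      Tendsto (fun n => G N n z) atTop (𝓝 (FL N z)) := by
    intro N z hz
    show Tendsto _ _ (𝓝 (if hz' : z ∈ unitDisc then _ else _))
    rw [dif_pos hz]
    exact Classical.choose_spec (hex N z hz)
  have hFLabs : ∀ N z, z ∈ unitDisc → Complex.abs (FL N z) ≤ 1 := by
    intro N z hz
    have h1 : Tendsto (fun n => Complex.abs (G N n z)) atTop (𝓝 (Complex.abs (FL N z))) :=
      (continuous_norm.continuousAt.tendsto).comp (hFLtend N z hz)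
    apply le_of_tendsto h1
    filter_upwards with n
    exact le_of_lt (hGm N n hz)
  have hFLclose : ∀ ra : ℝ, 0 ≤ ra → ra < 1 → ∃ CK, 1 ≤ CK ∧ ∀ N n, ∀ z ∈ unitDisc,
      pd z a ≤ ra → pd (FL N z) (G N n z) ≤ CK * Tail (N + n) := by
    intro ra hra0 hra1
    obtain ⟨CK, hCK1, hch⟩ := hcauchy ra hra0 hra1
    refine ⟨CK, hCK1, ?_⟩
    intro N n z hz hzra
    have h1 : Tendsto (fun n' => pd (G N n' z) (G N n z)) atTop
        (𝓝 (pd (FL N z) (G N n z))) :=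
      tendsto_pd_of_tendsto (hFLtend N z hz) (hGm N n hz) (hFLabs N z hz)
    apply le_of_tendsto h1
    rw [eventually_atTop]
    refine ⟨n, fun n' hn' => ?_⟩
    refine le_trans (hch N n n' hn' z hz hzra) ?_
    exact mul_le_mul_of_nonneg_left (hTailbound N n n') (by linarith)
  have hFLpd : ∀ N, ∀ z ∈ unitDisc,
      pd (FL N z) a ≤ mobAdd (mobAdd (pd z a) Q₁) M₀ := by
    intro N z hz
    have hGbound : ∀ n, pd (G N n z) a ≤ mobAdd (mobAdd (pd z a) Q₁) M₀ := by
      intro n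
      refine le_trans (pd_triangle_mob (hGm N n hz) (hfIterM (imv n) ha) ha) ?_
      apply mobAdd_mono (pd_nonneg _ _) (pd_nonneg _ _) _ (hM₀j (imv n)) _ hM₀lt1
      · show pd (f^[imv n] (T N n z)) (f^[imv n] a) ≤ _
        rw [hIterIso (imv n) _ (hTm N n hz) _ ha]
        exact horbZ N n z hz
      · exact mobAdd_lt_one (pd_nonneg _ _) (pd_lt_one' hz ha) hQ₁0 hQ₁1
    have h1 : Tendsto (fun n => pd (G N n z) a) atTop (𝓝 (pd (FL N z) a)) :=
      tendsto_pd_of_tendsto (hFLtend N z hz) ha (hFLabs N z hz)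
    exact le_of_tendsto h1 (Filter.Eventually.of_forall hGbound)
  have hFLmem : ∀ N, MapsTo (FL N) unitDisc unitDisc := by
    intro N z hz
    have h1 := hFLpd N z hz
    have hlt : mobAdd (mobAdd (pd z a) Q₁) M₀ < 1 :=
      mobAdd_lt_one (mobAdd_nonneg (pd_nonneg _ _) hQ₁0)
        (mobAdd_lt_one (pd_nonneg _ _) (pd_lt_one' hz ha) hQ₁0 hQ₁1) hM₀0 hM₀lt1
    have h2 : pd (FL N z) a < 1 := lt_of_le_of_lt h1 hlt
    have h3 : Complex.abs (FL N z) ≤ 1 := hFLabs N z hz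
    rcases lt_or_eq_of_le h3 with h4 | h4
    · exact h4
    · exfalso
      rw [pd_eq_one_of_boundary h4 (show Complex.abs a < 1 from ha)] at h2
      exact lt_irrefl 1 h2
  -- per-compact pd radius
  have hbound_compact : ∀ K : Set ℂ, K ⊆ unitDisc → IsCompact K →
      ∃ ra, 0 ≤ ra ∧ ra < 1 ∧ ∀ z ∈ K, pd z a ≤ ra := by
    intro K hKD hK
    rcases K.eq_empty_or_nonempty with rfl | hKne
    · exact ⟨0, le_rfl, one_pos, fun z hz => absurd hz (Set.notMem_empty z)⟩
    · have hc1 : ContinuousOn (fun z : ℂ => z - a) K :=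
        (continuous_id.sub continuous_const).continuousOn
      have hc2 : ContinuousOn (fun z : ℂ => (1:ℂ) - (starRingEnd ℂ) a * z) K :=
        (continuous_const.sub (continuous_const.mul continuous_id)).continuousOn
      have hc3 : ContinuousOn (fun z : ℂ => (z - a) / (1 - (starRingEnd ℂ) a * z)) K :=
        hc1.div hc2 (fun z hz => denom_ne_zero (hKD hz) ha)
      have hcont : ContinuousOn (fun z => pd z a) K :=
        continuous_norm.comp_continuousOn hc3
      obtain ⟨z₀, hz₀K, hz₀max⟩ := hK.exists_isMaxOn hKne hcont
      exact ⟨pd z₀ a, pd_nonneg _ _, pd_lt_one' (hKD hz₀K) ha, fun z hz => hz₀max hz⟩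
  -- uniform convergence of G N to FL N
  have hTLU : ∀ N, TendstoLocallyUniformlyOn (fun n z => G N n z) (FL N) atTop unitDisc := by
    intro N
    rw [tendstoLocallyUniformlyOn_iff_forall_isCompact hDopen]
    intro K hKD hK
    obtain ⟨ra, hra0, hra1, hraK⟩ := hbound_compact K hKD hK
    obtain ⟨CK, hCK1, hclose⟩ := hFLclose ra hra0 hra1
    rw [Metric.tendstoUniformlyOn_iff]
    intro η hη
    have h1 : Tendsto (fun n : ℕ => Tail (N + n)) atTop (𝓝 0) :=
      hTailtend.comp (tendsto_atTop_mono (fun n => Nat.le_add_left n N) tendsto_id)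
    have htend : Tendsto (fun n => 2 * CK * Tail (N + n)) atTop (𝓝 0) := by
      have h2 := h1.const_mul (2 * CK)
      simpa using h2
    have hev : ∀ᶠ n in atTop, 2 * CK * Tail (N + n) < η := htend.eventually (gt_mem_nhds hη)
    filter_upwards [hev] with n hn z hzK
    have hz : z ∈ unitDisc := hKD hzK
    have h3 : pd (FL N z) (G N n z) ≤ CK * Tail (N + n) := hclose N n z hz (hraK z hzK)
    have h4 := dist_le_two_pd (show Complex.abs (FL N z) < 1 from hFLmem N hz)
      (show Complex.abs (G N n z) < 1 from hGm N n hz)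
    calc dist (FL N z) (G N n z) ≤ 2 * pd (FL N z) (G N n z) := h4
      _ ≤ 2 * (CK * Tail (N + n)) := by linarith
      _ = 2 * CK * Tail (N + n) := by ring
      _ < η := hn
  have hFLdiff : ∀ N, DifferentiableOn ℂ (FL N) unitDisc := fun N =>
    (hTLU N).differentiableOn (Filter.Eventually.of_forall (fun n => hGd N n)) hDopen
  -- the convergence statement
  have hconv : ∀ j, j < m → TendstoLocallyUniformlyOn
      (fun n z => leftComp fseq (n * m + j) z) (fun z => f^[j] (FL 0 z)) atTop unitDisc := by
    intro j hj
    rw [tendstoLocallyUniformlyOn_iff_forall_isCompact hDopen]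
    intro K hKD hK
    obtain ⟨ra, hra0, hra1, hraK⟩ := hbound_compact K hKD hK
    obtain ⟨CK, hCK1, hclose⟩ := hFLclose ra hra0 hra1
    rw [Metric.tendstoUniformlyOn_iff]
    intro η hη
    have htone : Tendsto (fun n : ℕ => n * m + j) atTop atTop :=
      tendsto_atTop_mono
        (fun n => le_trans (Nat.le_mul_of_pos_right n hm0) (Nat.le_add_right _ j)) tendsto_id
    have htend : Tendsto (fun n => 2 * CK * Tail (n * m + j)) atTop (𝓝 0) := by
      have h1 : Tendsto (fun n : ℕ => Tail (n * m + j)) atTop (𝓝 0) := hTailtend.comp htone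
      have h2 := h1.const_mul (2 * CK)
      simpa using h2
    have hev : ∀ᶠ n in atTop, 2 * CK * Tail (n * m + j) < η := htend.eventually (gt_mem_nhds hη)
    filter_upwards [hev] with n hn z hzK
    have hz : z ∈ unitDisc := hKD hzK
    have hpm : (n * m + j) % m = j := by
      rw [Nat.add_comm, Nat.add_mul_mod_self_right, Nat.mod_eq_of_lt hj]
    have hid : leftComp fseq (n * m + j) z = f^[j] (G 0 (n * m + j) z) := by
      rw [hGrecover (n * m + j) z hz, hpm]
    have h1 : pd (FL 0 z) (G 0 (n * m + j) z) ≤ CK * Tail (n * m + j) := by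
      have h2 := hclose 0 (n * m + j) z hz (hraK z hzK)
      rwa [Nat.zero_add] at h2
    have h3 := dist_le_two_pd
      (show Complex.abs (f^[j] (FL 0 z)) < 1 from hfIterM j (hFLmem 0 hz))
      (show Complex.abs (f^[j] (G 0 (n * m + j) z)) < 1 from hfIterM j (hGm 0 _ hz))
    rw [hIterIso j _ (hFLmem 0 hz) _ (hGm 0 _ hz)] at h3
    show dist (f^[j] (FL 0 z)) (leftComp fseq (n * m + j) z) < η
    rw [hid]
    calc dist (f^[j] (FL 0 z)) (f^[j] (G 0 (n * m + j) z))
        ≤ 2 * pd (FL 0 z) (G 0 (n * m + j) z) := h3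
      _ ≤ 2 * (CK * Tail (n * m + j)) := by linarith
      _ = 2 * CK * Tail (n * m + j) := by ring
      _ < η := hn
  -- nonconstancy
  have hFNnc : ∀ N, ∃ u ∈ unitDisc, ∃ v ∈ unitDisc,
      leftComp fseq N u ≠ leftComp fseq N v := by
    intro N
    induction N with
    | zero => exact ⟨a, ha, b, hb, hab⟩
    | succ N ih =>
      have h := comp_nonconstant (g := fseq N) (h := leftComp fseq N) (hholo N)
        (leftComp_diffOn hholo hself N) (leftComp_mapsTo hself N) (hnonconst N) ih
      exact h
  have hβ0 : 0 < pd a b := by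
    unfold StabAux.pd
    rw [map_div₀]
    apply div_pos
    · rw [Complex.abs.pos_iff, sub_ne_zero]
      exact hab
    · exact denom_pos (show Complex.abs a < 1 from ha) (show Complex.abs b < 1 from hb)
  obtain ⟨CK', hCK'1, hclose'⟩ := hFLclose (pd a b) hβ0.le (pd_lt_one' ha hb)
  have htendN : Tendsto (fun N => CK' * Tail N) atTop (𝓝 0) := by
    have h1 := hTailtend.const_mul CK'
    simpa using h1
  have hevN : ∀ᶠ N in atTop, CK' * Tail N < pd a b / 4 :=
    htendN.eventually (gt_mem_nhds (by positivity))
  obtain ⟨N, hN⟩ := hevN.exists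
  have hFta : pd (FL N a) a ≤ CK' * Tail N := by
    have h1 := hclose' N 0 a ha (by rw [pd_self]; exact hβ0.le)
    rw [hG0 N a, Nat.add_zero] at h1
    exact h1
  have hFtb : pd (FL N b) b ≤ CK' * Tail N := by
    have h1 := hclose' N 0 b hb (le_of_eq (pd_comm b a))
    rw [hG0 N b, Nat.add_zero] at h1
    exact h1
  have hFtne : FL N a ≠ FL N b := by
    intro heq
    have h1 : pd a b ≤ pd a (FL N a) + pd (FL N a) b :=
      pd_triangle ha (hFLmem N ha) hb
    have h2 : pd (FL N a) b ≤ pd (FL N a) (FL N b) + pd (FL N b) b :=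
      pd_triangle (hFLmem N ha) (hFLmem N hb) hb
    have h3 : pd (FL N a) (FL N b) = 0 := by rw [heq, pd_self]
    have h4 : pd a (FL N a) = pd (FL N a) a := pd_comm _ _
    linarith [hFta, hFtb, hN, hβ0]
  have hGdecomp : ∀ n, ∀ z ∈ unitDisc,
      G 0 (N + n) z = f^[imv N] (G N n (leftComp fseq N z)) := by
    intro n z hz
    have hFNz : leftComp fseq N z ∈ unitDisc := leftComp_mapsTo hself N hz
    have hX : T N n (leftComp fseq N z) ∈ unitDisc := hTm N n hFNz
    show f^[imv (N+n)] (T 0 (N+n) z) = f^[imv N] (f^[imv n] (T N n (leftComp fseq N z)))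
    rw [hT0 (N+n) z, hTdecomp N n z, ← Function.iterate_add_apply]
    apply hfInj (N + n)
      ((hfIterM (imv (N+n))) hX) ((hfIterM (imv N + imv n)) hX)
    rw [← Function.iterate_add_apply, ← Function.iterate_add_apply]
    have e1 : ((N+n) + imv (N+n)) % m = ((N+n) + (imv N + imv n)) % m := by
      have h1 := StabAux.nat_add_im m (N+n) hm0
      have h2 := StabAux.nat_add_im m N hm0
      have h3 := StabAux.nat_add_im m n hm0
      have h4 : (N+n) + (imv N + imv n) = (N + imv N) + (n + imv n) := by ring
      rw [h1, h4, Nat.add_mod, h2, h3]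
      simp
    exact hIterCongr _ _ e1 _ hX
  have hFid : ∀ z ∈ unitDisc, FL 0 z = f^[imv N] (FL N (leftComp fseq N z)) := by
    intro z hz
    have hFNz : leftComp fseq N z ∈ unitDisc := leftComp_mapsTo hself N hz
    have hP : FL N (leftComp fseq N z) ∈ unitDisc := hFLmem N hFNz
    have h1 : Tendsto (fun n => G 0 (N + n) z) atTop (𝓝 (FL 0 z)) :=
      (hFLtend 0 z hz).comp (tendsto_atTop_mono (fun n => Nat.le_add_left n N) tendsto_id)
    have h2 : Tendsto (fun n => f^[imv N] (G N n (leftComp fseq N z))) atTop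
        (𝓝 (f^[imv N] (FL N (leftComp fseq N z)))) := by
      have hc : ContinuousWithinAt (f^[imv N]) unitDisc (FL N (leftComp fseq N z)) :=
        (hfIterD (imv N)).continuousOn _ hP
      apply hc.tendsto.comp
      rw [tendsto_nhdsWithin_iff]
      exact ⟨hFLtend N _ hFNz, Filter.Eventually.of_forall (fun n => hGm N n hFNz)⟩
    have h3 : (fun n => G 0 (N + n) z) = fun n => f^[imv N] (G N n (leftComp fseq N z)) :=
      funext fun n => hGdecomp n z hz
    rw [h3] at h1
    exact tendsto_nhds_unique h1 h2
  have hFnc : ∃ u ∈ unitDisc, ∃ v ∈ unitDisc, FL 0 u ≠ FL 0 v := by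
    obtain ⟨u, hu, v, hv, hne⟩ := comp_nonconstant (hFLdiff N)
      (leftComp_diffOn hholo hself N) (leftComp_mapsTo hself N)
      ⟨a, ha, b, hb, hFtne⟩ (hFNnc N)
    refine ⟨u, hu, v, hv, ?_⟩
    rw [hFid u hu, hFid v hv]
    intro heq
    exact hne (hfInj (imv N) (hFLmem N (leftComp_mapsTo hself N hu))
      (hFLmem N (leftComp_mapsTo hself N hv)) heq)
  exact ⟨FL 0, hFLdiff 0, hFLmem 0, hFnc, hconv⟩
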